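/- arXiv:1212.3004 — 5 statements merged into one kernel-verified Lean document; each statement's English description precedes it below -/
import Mathlib

section
/- Let P₁ and P₂ be probability measures on the positive integers with P₁ ≠ P₂, and suppose that the maximum of the support of P₂ is not larger than the minimum of the support of P₁, i.e. every positive integer in the support of P₂ is less than or equal to every positive integer in the support of P₁. Then for any β > 0, the speeds satisfy v(β, P₁) ≥ v(β, P₂). -/
open MeasureTheory Filter

noncomputable section

namespace GWSpeed

instance : MeasurableSpace ℕ+ := ⊤
instance : MeasurableSpace (List ℕ+) := ⊤

/-- An environment assigns to each Ulam–Harris vertex (a finite sequence of positive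
integers, encoded as a list whose head is the last coordinate) its number of children. -/
abbrev Env := (List ℕ+) → ℕ+

open Classical in
/-- Transition probability of the `β`-biased walk on the tree `T(ω)`:
from the root, each of its children is equally likely; from any other vertex `x` with
`k = ω x` children, the parent (`x.tail`) gets probability `1/(1+βk)` and each child
(`i :: x` for `1 ≤ i ≤ ω x`) gets `β/(1+βk)`. -/
def step (β : ℝ) (ω : Env) (x y : List ℕ+) : ℝ :=
  if x = [] then
    (if ∃ i : ℕ+, i ≤ ω x ∧ y = i :: x then 1 / ((ω x : ℕ) : ℝ) else 0)
  else if y = x.tail then 1 / (1 + β * ((ω x : ℕ) : ℝ))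
  else if ∃ i : ℕ+, i ≤ ω x ∧ y = i :: x then β / (1 + β * ((ω x : ℕ) : ℝ))
  else 0

/-- `μ` is the annealed law of the `β`-biased walk in a Galton–Watson environment with
progeny distribution `P`: the probability of any cylinder event specifying the environment
on a finite set `S` of vertices containing all vertices visited before time `n`, together
with the first `n` steps of the walk (started at the root `[]`), is the product of the
progeny probabilities and the quenched transition probabilities. -/
def IsAnnealedLaw (β : ℝ) (P : Measure ℕ+) (μ : Measure (Env × (ℕ → List ℕ+))) : Prop :=
  IsProbabilityMeasure μ ∧
  μ {p | p.2 0 = []} = 1 ∧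
  ∀ (n : ℕ) (x : ℕ → List ℕ+) (S : Finset (List ℕ+)) (f : Env),
    x 0 = [] → (∀ i, i < n → x i ∈ S) →
    (μ {p | (∀ v ∈ S, p.1 v = f v) ∧ (∀ i, i ≤ n → p.2 i = x i)}).toReal
      = (∏ v ∈ S, (P {f v}).toReal) * ∏ i ∈ Finset.range n, step β f (x i) (x (i + 1))

/-- `v` is the speed of the `β`-biased walk on the Galton–Watson tree with progeny
distribution `P`: `|X_n|/n → v` almost surely under the annealed law. -/
def HasSpeed (β : ℝ) (P : Measure ℕ+) (v : ℝ) : Prop :=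
  ∃ μ : Measure (Env × (ℕ → List ℕ+)), IsAnnealedLaw β P μ ∧
    ∀ᵐ p ∂μ, Tendsto (fun n : ℕ => (((p.2 n).length : ℝ)) / (n : ℝ)) atTop (nhds v)

/-- `P₁` stochastically dominates `P₂` (and `P₁ ≠ P₂`). -/
def StochDom (P₁ P₂ : Measure ℕ+) : Prop :=
  P₁ ≠ P₂ ∧ ∀ k : ℕ+, P₂ {n | k ≤ n} ≤ P₁ {n | k ≤ n}

/-- `Q` is a monotone coupling of `(P₁, P₂)`: a joint law of `(Z₁', Z₂')` with marginals
`P₁`, `P₂` and `Z₂' ≤ Z₁'` almost surely. -/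
def IsMonotoneCoupling (P₁ P₂ : Measure ℕ+) (Q : Measure (ℕ+ × ℕ+)) : Prop :=
  IsProbabilityMeasure Q ∧ Q.map Prod.fst = P₁ ∧ Q.map Prod.snd = P₂ ∧
    Q {z | z.2 ≤ z.1} = 1

/-- `E[1/Z₂' − 1/Z₁']` for a coupling `Q` of `(Z₁', Z₂')`. -/
def EA (Q : Measure (ℕ+ × ℕ+)) : ℝ :=
  ∫ z, (1 / ((z.2 : ℕ) : ℝ) - 1 / ((z.1 : ℕ) : ℝ)) ∂Q

open Classical in
/-- `E[(1/Z₁ − 1/Z₂)·1_{Z₁ < Z₂}]` for independent `Z₁ ~ P₁`, `Z₂ ~ P₂`. -/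
def EB (P₁ P₂ : Measure ℕ+) : ℝ :=
  ∫ z : ℕ+ × ℕ+, (if z.1 < z.2 then 1 / ((z.1 : ℕ) : ℝ) - 1 / ((z.2 : ℕ) : ℝ) else 0)
    ∂(P₁.prod P₂)

/-- `E[Z₂'(1/Z₂' − 1/Z₁')]` for a coupling `Q` of `(Z₁', Z₂')`. -/
def EC (Q : Measure (ℕ+ × ℕ+)) : ℝ :=
  ∫ z, ((z.2 : ℕ) : ℝ) * (1 / ((z.2 : ℕ) : ℝ) - 1 / ((z.1 : ℕ) : ℝ)) ∂Q

/-- The quantity `β₁` of the main theorem, for the constant `c = c_δ`. -/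
def beta1 (c : ℝ) (P₁ P₂ : Measure ℕ+) (Q : Measure (ℕ+ × ℕ+)) : ℝ :=
  c * min (EB P₁ P₂ / EA Q) (EC Q / EA Q + 1)

end GWSpeed

namespace GWAux
open GWSpeed ENNReal

noncomputable section

def qE (b : ℝ≥0∞) (ω : Env) (x : List ℕ+) : ℝ≥0∞ :=
  if x = [] then 0 else (1 + b * ((ω x : ℕ) : ℝ≥0∞))⁻¹

def cE (b : ℝ≥0∞) (ω : Env) (x : List ℕ+) : ℝ≥0∞ :=
  if x = [] then (((ω x : ℕ) : ℝ≥0∞))⁻¹ else b * (1 + b * ((ω x : ℕ) : ℝ≥0∞))⁻¹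

def F (b : ℝ≥0∞) (ω : Env) : ℕ → List ℕ+ → ℝ≥0∞
  | 0, x => (x.length : ℝ≥0∞)
  | n+1, x => qE b ω x * F b ω n x.tail
      + cE b ω x * ∑ i ∈ Finset.range (ω x : ℕ), F b ω n (i.succPNat :: x)

variable {b : ℝ≥0∞} {ω : Env}

lemma den_ne_zero (b : ℝ≥0∞) (k : ℕ) : (1 + b * (k : ℝ≥0∞)) ≠ 0 := by
  simp

lemma den_ne_top (hbt : b ≠ ⊤) (k : ℕ) : (1 + b * (k : ℝ≥0∞)) ≠ ⊤ := by
  simp [ENNReal.add_ne_top, ENNReal.mul_ne_top hbt (natCast_ne_top k)]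

lemma qE_le_one : qE b ω x ≤ 1 := by
  unfold qE
  split
  · exact zero_le_one
  · calc (1 + b * ((ω x : ℕ) : ℝ≥0∞))⁻¹ ≤ (1 : ℝ≥0∞)⁻¹ :=
        ENNReal.inv_le_inv' le_self_add
    _ = 1 := inv_one

lemma qE_ne_top : qE b ω x ≠ ⊤ := ne_top_of_le_ne_top one_ne_top qE_le_one

lemma norm_qc (hb0 : b ≠ 0) (hbt : b ≠ ⊤) (ω : Env) (x : List ℕ+) :
    qE b ω x + ((ω x : ℕ) : ℝ≥0∞) * cE b ω x = 1 := by
  unfold qE cE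
  split
  · rw [zero_add]
    exact ENNReal.mul_inv_cancel (by exact_mod_cast (ω x).pos.ne') (natCast_ne_top _)
  · calc (1 + b * ((ω x : ℕ) : ℝ≥0∞))⁻¹
        + ((ω x : ℕ) : ℝ≥0∞) * (b * (1 + b * ((ω x : ℕ) : ℝ≥0∞))⁻¹)
        = (1 + b * ((ω x : ℕ) : ℝ≥0∞)) * (1 + b * ((ω x : ℕ) : ℝ≥0∞))⁻¹ := by ring
    _ = 1 := ENNReal.mul_inv_cancel (den_ne_zero b _) (den_ne_top hbt _)
lemma F_succ_le (hb0 : b ≠ 0) (hbt : b ≠ ⊤) {n : ℕ} {x : List ℕ+} {V : ℝ≥0∞}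
    (h1 : x ≠ [] → F b ω n x.tail ≤ V)
    (h2 : ∀ i ∈ Finset.range (ω x : ℕ), F b ω n (i.succPNat :: x) ≤ V) :
    F b ω (n + 1) x ≤ V := by
  have hq : qE b ω x * F b ω n x.tail ≤ qE b ω x * V := by
    by_cases hx : x = []
    · simp [qE, hx]
    · exact mul_le_mul_right (h1 hx) _
  have hc : (∑ i ∈ Finset.range (ω x : ℕ), F b ω n (i.succPNat :: x))
      ≤ ((ω x : ℕ) : ℝ≥0∞) * V := by
    calc (∑ i ∈ Finset.range (ω x : ℕ), F b ω n (i.succPNat :: x))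
        ≤ (Finset.range (ω x : ℕ)).card • V := Finset.sum_le_card_nsmul _ _ _ h2
      _ = ((ω x : ℕ) : ℝ≥0∞) * V := by rw [Finset.card_range, nsmul_eq_mul]
  calc F b ω (n + 1) x
      = qE b ω x * F b ω n x.tail
        + cE b ω x * ∑ i ∈ Finset.range (ω x : ℕ), F b ω n (i.succPNat :: x) := rfl
    _ ≤ qE b ω x * V + cE b ω x * (((ω x : ℕ) : ℝ≥0∞) * V) :=
        add_le_add hq (mul_le_mul_right hc _)
    _ = (qE b ω x + ((ω x : ℕ) : ℝ≥0∞) * cE b ω x) * V := by ring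
    _ = V := by rw [norm_qc hb0 hbt, one_mul]

lemma le_F_succ (hb0 : b ≠ 0) (hbt : b ≠ ⊤) {n : ℕ} {x : List ℕ+} {V : ℝ≥0∞}
    (h1 : x ≠ [] → V ≤ F b ω n x.tail)
    (h2 : ∀ i ∈ Finset.range (ω x : ℕ), V ≤ F b ω n (i.succPNat :: x)) :
    V ≤ F b ω (n + 1) x := by
  have hq : qE b ω x * V ≤ qE b ω x * F b ω n x.tail := by
    by_cases hx : x = []
    · simp [qE, hx]
    · exact mul_le_mul_right (h1 hx) _
  have hc : ((ω x : ℕ) : ℝ≥0∞) * V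
      ≤ (∑ i ∈ Finset.range (ω x : ℕ), F b ω n (i.succPNat :: x)) := by
    calc ((ω x : ℕ) : ℝ≥0∞) * V = (Finset.range (ω x : ℕ)).card • V := by
          rw [Finset.card_range, nsmul_eq_mul]
      _ ≤ _ := Finset.card_nsmul_le_sum _ _ _ h2
  calc V = (qE b ω x + ((ω x : ℕ) : ℝ≥0∞) * cE b ω x) * V := by
        rw [norm_qc hb0 hbt, one_mul]
    _ = qE b ω x * V + cE b ω x * (((ω x : ℕ) : ℝ≥0∞) * V) := by ring
    _ ≤ _ := add_le_add hq (mul_le_mul_right hc _)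

lemma F_le (hb0 : b ≠ 0) (hbt : b ≠ ⊤) :
    ∀ (n : ℕ) (x : List ℕ+), F b ω n x ≤ (n : ℝ≥0∞) + x.length := by
  intro n
  induction n with
  | zero => intro x; simp [F]
  | succ n ih =>
    intro x
    apply F_succ_le hb0 hbt
    · intro _
      calc F b ω n x.tail ≤ (n : ℝ≥0∞) + x.tail.length := ih _
        _ ≤ ((n+1 : ℕ) : ℝ≥0∞) + x.length := by
            push_cast
            gcongr
            · exact le_add_of_nonneg_right zero_le_one
            · exact_mod_cast (x.length_tail ▸ Nat.sub_le x.length 1)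
    · intro i _
      calc F b ω n (i.succPNat :: x) ≤ (n : ℝ≥0∞) + (i.succPNat :: x).length := ih _
        _ = ((n+1 : ℕ) : ℝ≥0∞) + x.length := by
            simp [List.length_cons]; push_cast; ring

end
end GWAux
-- appended to p1
namespace GWAux
open GWSpeed ENNReal
noncomputable section
variable {b : ℝ≥0∞}

lemma F_mono (hb0 : b ≠ 0) (hbt : b ≠ ⊤) {ω₁ ω₂ : Env}
    (H : ∀ v w : List ℕ+, ω₂ w ≤ ω₁ v) :
    ∀ (n : ℕ) (x₁ x₂ : List ℕ+), x₂.length ≤ x₁.length →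
      x₁.length % 2 = x₂.length % 2 → F b ω₂ n x₂ ≤ F b ω₁ n x₁ := by
  intro n
  induction n with
  | zero =>
    intro x₁ x₂ hlen _
    simpa [F] using (by exact_mod_cast hlen : (x₂.length : ℝ≥0∞) ≤ x₁.length)
  | succ n ih =>
    intro x₁ x₂ hlen hpar
    by_cases hcase : x₁.length = x₂.length ∧ x₂ ≠ []
    · -- equal depths, both non-root
      obtain ⟨hl, hx₂⟩ := hcase
      have hlen₂pos : 0 < x₂.length := List.length_pos_iff.2 hx₂
      have hx₁ : x₁ ≠ [] := by
        intro h; rw [h] at hl; simp at hl; omega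
      set k₁ := ((ω₁ x₁ : ℕ) : ℝ≥0∞) with hk₁def
      set k₂ := ((ω₂ x₂ : ℕ) : ℝ≥0∞) with hk₂def
      have hk : k₂ ≤ k₁ := by
        rw [hk₁def, hk₂def]; exact_mod_cast (H x₁ x₂)
      have hk₁0 : k₁ ≠ 0 := by rw [hk₁def]; exact_mod_cast (ω₁ x₁).pos.ne'
      have hk₁t : k₁ ≠ ⊤ := natCast_ne_top _
      set q₁ := qE b ω₁ x₁ with hq₁def
      set q₂ := qE b ω₂ x₂ with hq₂def
      have hq₁ : q₁ = (1 + b * k₁)⁻¹ := by rw [hq₁def, qE, if_neg hx₁]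
      have hq₂ : q₂ = (1 + b * k₂)⁻¹ := by rw [hq₂def, qE, if_neg hx₂]
      have hc₁ : cE b ω₁ x₁ = b * q₁ := by rw [hq₁, cE, if_neg hx₁]
      have hc₂ : cE b ω₂ x₂ = b * q₂ := by rw [hq₂, cE, if_neg hx₂]
      have hq : q₁ ≤ q₂ := by
        rw [hq₁, hq₂]; exact ENNReal.inv_le_inv' (by gcongr)
      have hq₂1 : q₂ ≤ 1 := qE_le_one
      have hq₂t : q₂ ≠ ⊤ := qE_ne_top
      have hq₁t : q₁ ≠ ⊤ := qE_ne_top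
      set S1 := ∑ j ∈ Finset.range (ω₁ x₁ : ℕ), F b ω₁ n (j.succPNat :: x₁) with hS1def
      set T₁ := F b ω₁ n x₁.tail with hT₁def
      set T₂ := F b ω₂ n x₂.tail with hT₂def
      set D₁ := k₁⁻¹ * S1 with hD₁def
      have hkD : k₁ * D₁ = S1 := by
        rw [hD₁def, ← mul_assoc, ENNReal.mul_inv_cancel hk₁0 hk₁t, one_mul]
      have htail₂ : x₂.tail.length = x₂.length - 1 := List.length_tail
      have htail₁ : x₁.tail.length = x₁.length - 1 := List.length_tail
      -- parents
      have hTT : T₂ ≤ T₁ := ih _ _ (by omega) (by omega)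
      -- each child of x₂ vs each child of x₁
      have hChild : ∀ i ∈ Finset.range (ω₂ x₂ : ℕ), ∀ j ∈ Finset.range (ω₁ x₁ : ℕ),
          F b ω₂ n (i.succPNat :: x₂) ≤ F b ω₁ n (j.succPNat :: x₁) := by
        intro i _ j _
        exact ih _ _ (by simp [List.length_cons]; omega) (by simp [List.length_cons]; omega)
      -- tail of x₂ vs each child of x₁
      have hT2C : ∀ j ∈ Finset.range (ω₁ x₁ : ℕ), T₂ ≤ F b ω₁ n (j.succPNat :: x₁) := by
        intro j _
        exact ih _ _ (by simp [List.length_cons]; omega) (by simp [List.length_cons]; omega)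
      have avg_ge : ∀ V : ℝ≥0∞, (∀ j ∈ Finset.range (ω₁ x₁ : ℕ),
          V ≤ F b ω₁ n (j.succPNat :: x₁)) → V ≤ D₁ := by
        intro V hV
        have h1 : k₁ * V ≤ S1 := by
          calc k₁ * V = (Finset.range (ω₁ x₁ : ℕ)).card • V := by
                rw [Finset.card_range, nsmul_eq_mul, hk₁def]
            _ ≤ S1 := Finset.card_nsmul_le_sum _ _ _ hV
        calc V = k₁⁻¹ * (k₁ * V) := by
              rw [← mul_assoc, ENNReal.inv_mul_cancel hk₁0 hk₁t, one_mul]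
          _ ≤ k₁⁻¹ * S1 := mul_le_mul_right h1 _
      have hT2D : T₂ ≤ D₁ := avg_ge _ hT2C
      have hS2D : (∑ i ∈ Finset.range (ω₂ x₂ : ℕ), F b ω₂ n (i.succPNat :: x₂))
          ≤ k₂ * D₁ := by
        calc (∑ i ∈ Finset.range (ω₂ x₂ : ℕ), F b ω₂ n (i.succPNat :: x₂))
            ≤ (Finset.range (ω₂ x₂ : ℕ)).card • D₁ :=
              Finset.sum_le_card_nsmul _ _ _ (fun i hi => avg_ge _ (hChild i hi))
          _ = k₂ * D₁ := by rw [Finset.card_range, nsmul_eq_mul, hk₂def]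
      have hDD : T₂ ≤ D₁ := hT2D
      -- main chain
      have hnorm₂ := norm_qc (ω := ω₂) hb0 hbt (x := x₂)
      have hnorm₁ := norm_qc (ω := ω₁) hb0 hbt (x := x₁)
      have hkc₂ : k₂ * cE b ω₂ x₂ = 1 - q₂ :=
        (ENNReal.sub_eq_of_eq_add hq₂t (by rw [← hnorm₂]; ring)).symm
      have hkc₁ : k₁ * cE b ω₁ x₁ = 1 - q₁ :=
        (ENNReal.sub_eq_of_eq_add hq₁t (by rw [← hnorm₁]; ring)).symm
      calc F b ω₂ (n+1) x₂
          = q₂ * T₂ + cE b ω₂ x₂ * ∑ i ∈ Finset.range (ω₂ x₂ : ℕ),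
              F b ω₂ n (i.succPNat :: x₂) := rfl
        _ ≤ q₂ * T₂ + cE b ω₂ x₂ * (k₂ * D₁) := by gcongr
        _ = q₂ * T₂ + (k₂ * cE b ω₂ x₂) * D₁ := by ring
        _ = q₂ * T₂ + (1 - q₂) * D₁ := by rw [hkc₂]
        _ = (q₁ + (q₂ - q₁)) * T₂ + (1 - q₂) * D₁ := by
            rw [add_tsub_cancel_of_le hq]
        _ = q₁ * T₂ + (q₂ - q₁) * T₂ + (1 - q₂) * D₁ := by ring
        _ ≤ q₁ * T₁ + (q₂ - q₁) * D₁ + (1 - q₂) * D₁ := by gcongr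
        _ = q₁ * T₁ + ((1 - q₂) + (q₂ - q₁)) * D₁ := by ring
        _ = q₁ * T₁ + (1 - q₁) * D₁ := by rw [tsub_add_tsub_cancel hq₂1 hq]
        _ = q₁ * T₁ + (k₁ * cE b ω₁ x₁) * D₁ := by rw [hkc₁]
        _ = q₁ * T₁ + cE b ω₁ x₁ * (k₁ * D₁) := by ring
        _ = q₁ * T₁ + cE b ω₁ x₁ * S1 := by rw [hkD]
        _ = F b ω₁ (n+1) x₁ := rfl
    · -- strictly separated depths, or both roots
      have hsep : x₂.length + 2 ≤ x₁.length ∨ (x₁ = [] ∧ x₂ = []) := by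
        by_cases hl : x₁.length = x₂.length
        · right
          have hx₂ : x₂ = [] := by
            by_contra h; exact hcase ⟨hl, h⟩
          refine ⟨?_, hx₂⟩
          rw [hx₂] at hl; simp at hl
          exact hl
        · left; omega
      have htail₂ : x₂.tail.length = x₂.length - 1 := List.length_tail
      have htail₁ : x₁.tail.length = x₁.length - 1 := List.length_tail
      have hmain : ∀ y₁ : List ℕ+,
          (y₁.length + 1 = x₁.length ∨ y₁.length = x₁.length + 1) →
          F b ω₂ (n+1) x₂ ≤ F b ω₁ n y₁ := by
        intro y₁ hy₁
        apply F_succ_le hb0 hbt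
        · intro hx₂
          have h2pos : 0 < x₂.length := List.length_pos_iff.2 hx₂
          rcases hsep with h | h
          · exact ih _ _ (by omega) (by omega)
          · exact absurd h.2 hx₂
        · intro i _
          rcases hsep with h | h
          · exact ih _ _ (by simp [List.length_cons]; omega)
              (by simp [List.length_cons]; omega)
          · have h1 : x₂.length = 0 := by rw [h.2]; rfl
            have h2 : x₁.length = 0 := by rw [h.1]; rfl
            exact ih _ _ (by simp [List.length_cons]; omega)
              (by simp [List.length_cons]; omega)
      apply le_F_succ hb0 hbt
      · intro hx₁
        exact hmain x₁.tail (Or.inl (by have := List.length_pos_iff.2 hx₁; omega))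
      · intro j _
        exact hmain (j.succPNat :: x₁) (Or.inr (by simp [List.length_cons]))
end
end GWAux
namespace GWAux
open GWSpeed ENNReal
noncomputable section

variable {β : ℝ} {ω : Env}

lemma step_nonneg (hβ : 0 ≤ β) (ω : Env) (x y : List ℕ+) : 0 ≤ step β ω x y := by
  unfold step
  split_ifs <;> positivity

lemma length_le_of_step_ne_zero {x y : List ℕ+} (h : step β ω x y ≠ 0) :
    y.length ≤ x.length + 1 := by
  unfold step at h
  split_ifs at h with h1 h2 h3 h4
  · obtain ⟨i, -, rfl⟩ := h2
    simp [List.length_cons]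
  · exact absurd rfl h
  · subst h3
    exact le_trans (x.length_tail ▸ Nat.sub_le x.length 1) (Nat.le_succ _)
  · obtain ⟨i, -, rfl⟩ := h4
    simp [List.length_cons]
  · exact absurd rfl h

def pw (β : ℝ) (ω : Env) (n : ℕ) (x : Fin (n+1) → List ℕ+) : ℝ≥0∞ :=
  ∏ i : Fin n, ENNReal.ofReal (step β ω (x i.castSucc) (x i.succ))

def TS (β : ℝ) (ω : Env) (n : ℕ) (y : List ℕ+) : ℝ≥0∞ :=
  ∑' x : Fin (n+1) → List ℕ+,
    if x 0 = y then ((x (Fin.last n)).length : ℝ≥0∞) * pw β ω n x else 0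

lemma ofReal_inv_den (hβ : 0 < β) (k : ℕ) :
    ENNReal.ofReal (1 / (1 + β * (k : ℝ))) = (1 + ENNReal.ofReal β * (k : ℝ≥0∞))⁻¹ := by
  have hk : (0:ℝ) ≤ β * k := by positivity
  rw [one_div, ENNReal.ofReal_inv_of_pos (by linarith)]
  congr 1
  rw [ENNReal.ofReal_add zero_le_one hk, ENNReal.ofReal_one, ENNReal.ofReal_mul hβ.le,
    ENNReal.ofReal_natCast]

lemma tsum_stepE (hβ : 0 < β) (ω : Env) (y : List ℕ+) (G : List ℕ+ → ℝ≥0∞) :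
    ∑' z : List ℕ+, ENNReal.ofReal (step β ω y z) * G z
      = qE (ENNReal.ofReal β) ω y * G y.tail
        + cE (ENNReal.ofReal β) ω y * ∑ i ∈ Finset.range (ω y : ℕ), G (i.succPNat :: y) := by
  classical
  set b := ENNReal.ofReal β with hbdef
  set k := (ω y : ℕ) with hkdef
  set childset : Finset (List ℕ+) := (Finset.range k).image (fun i => i.succPNat :: y)
    with hchild
  have hmemchild : ∀ z, z ∈ childset ↔ ∃ i, i < k ∧ z = i.succPNat :: y := by
    intro z
    simp only [hchild, Finset.mem_image, Finset.mem_range]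
    constructor
    · rintro ⟨i, hi, rfl⟩; exact ⟨i, hi, rfl⟩
    · rintro ⟨i, hi, rfl⟩; exact ⟨i, hi, rfl⟩
  have hexiff : ∀ z, (∃ i : ℕ+, i ≤ ω y ∧ z = i :: y) ↔ z ∈ childset := by
    intro z
    rw [hmemchild]
    constructor
    · rintro ⟨i, hi, rfl⟩
      have hi' : (i : ℕ) ≤ k := by rw [hkdef]; exact_mod_cast hi
      have hipos : 1 ≤ (i : ℕ) := i.pos
      refine ⟨(i : ℕ) - 1, by omega, ?_⟩
      have : ((i : ℕ) - 1).succPNat = i := by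
        apply PNat.coe_injective
        simp [Nat.succPNat]
        omega
      rw [this]
    · rintro ⟨i, hi, rfl⟩
      refine ⟨i.succPNat, ?_, rfl⟩
      have : (i.succPNat : ℕ) = i + 1 := rfl
      rw [← PNat.coe_le_coe, this, ← hkdef]
      omega
  have htails : y.tail ∉ childset := by
    rw [hmemchild]
    rintro ⟨i, hi, hz⟩
    have h1 : y.tail.length = y.length - 1 := List.length_tail
    have h2 : y.tail.length = y.length + 1 := by rw [hz]; simp
    omega
  have h0 : ∀ z : List ℕ+, z ∉ insert y.tail childset →
      ENNReal.ofReal (step β ω y z) * G z = 0 := by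
    intro z hz
    rw [Finset.mem_insert] at hz
    push_neg at hz
    have hs : step β ω y z = 0 := by
      unfold step
      split_ifs with h1 h2 h3 h4
      · exact absurd ((hexiff z).1 h2) hz.2
      · rfl
      · exact absurd h3 hz.1
      · exact absurd ((hexiff z).1 h4) hz.2
      · rfl
    rw [hs, ENNReal.ofReal_zero, zero_mul]
  rw [tsum_eq_sum h0, Finset.sum_insert htails]
  have htailval : ENNReal.ofReal (step β ω y y.tail) = qE b ω y := by
    by_cases hy : y = []
    · have hne : ¬ ∃ i : ℕ+, i ≤ ω y ∧ y.tail = i :: y := by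
        rintro ⟨i, -, hz⟩
        rw [hy] at hz
        exact (List.cons_ne_nil _ _) hz.symm
      rw [step, if_pos hy, if_neg hne, ENNReal.ofReal_zero, qE, if_pos hy]
    · rw [step, if_neg hy, if_pos rfl, qE, if_neg hy, ← hkdef]
      exact ofReal_inv_den hβ k
  have hchildval : ∀ i ∈ Finset.range k,
      ENNReal.ofReal (step β ω y (i.succPNat :: y)) = cE b ω y := by
    intro i hi
    rw [Finset.mem_range] at hi
    have hex : ∃ j : ℕ+, j ≤ ω y ∧ i.succPNat :: y = j :: y :=
      (hexiff _).2 ((hmemchild _).2 ⟨i, hi, rfl⟩)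
    by_cases hy : y = []
    · rw [step, if_pos hy, if_pos hex, cE, if_pos hy, one_div,
        ENNReal.ofReal_inv_of_pos (by exact_mod_cast (ω y).pos), ENNReal.ofReal_natCast]
    · have hnt : i.succPNat :: y ≠ y.tail := by
        intro h
        have h1 : y.tail.length = y.length - 1 := List.length_tail
        have h2 : (i.succPNat :: y).length = y.length + 1 := by simp
        rw [h] at h2
        have := List.length_pos_iff.2 hy
        omega
      rw [step, if_neg hy, if_neg hnt, if_pos hex, cE, if_neg hy, div_eq_mul_one_div,
        ENNReal.ofReal_mul hβ.le, ← hkdef, ofReal_inv_den hβ k]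
  have hinj : ∀ a ∈ Finset.range k, ∀ c ∈ Finset.range k,
      a.succPNat :: y = c.succPNat :: y → a = c := by
    intro a _ c _ h
    have h2 : a.succPNat = c.succPNat := by
      exact List.head_eq_of_cons_eq h
    have h3 : a + 1 = c + 1 := congrArg (fun p : ℕ+ => (p : ℕ)) h2
    omega
  rw [Finset.sum_image hinj, htailval]
  congr 1
  rw [Finset.mul_sum]
  exact Finset.sum_congr rfl fun i hi => by rw [hchildval i hi]

lemma pw_cons (β : ℝ) (ω : Env) (n : ℕ) (a : List ℕ+) (w : Fin (n+1) → List ℕ+) :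
    pw β ω (n+1) (Fin.cons a w) = ENNReal.ofReal (step β ω a (w 0)) * pw β ω n w := by
  unfold pw
  rw [Fin.prod_univ_succ]
  have h1 : ∀ i : Fin n,
      ENNReal.ofReal (step β ω ((Fin.cons a w : Fin (n+2) → List ℕ+) (Fin.castSucc i.succ))
        ((Fin.cons a w : Fin (n+2) → List ℕ+) i.succ.succ))
        = ENNReal.ofReal (step β ω (w i.castSucc) (w i.succ)) := by
    intro i
    rw [← Fin.succ_castSucc]
    simp [Fin.cons_succ]
  rw [Finset.prod_congr rfl (fun i _ => h1 i)]
  simp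

lemma TS_eq_F (hβ : 0 < β) (ω : Env) :
    ∀ (n : ℕ) (y : List ℕ+), TS β ω n y = F (ENNReal.ofReal β) ω n y := by
  intro n
  induction n with
  | zero =>
    intro y
    have h : ∀ x : Fin 1 → List ℕ+, x ≠ (fun _ => y) →
        (if x 0 = y then ((x (Fin.last 0)).length : ℝ≥0∞) * pw β ω 0 x else 0) = 0 := by
      intro x hx
      rw [if_neg]
      intro h0
      apply hx
      funext i
      have : i = 0 := Subsingleton.elim _ _
      rw [this, h0]
    rw [TS, tsum_eq_single (fun _ : Fin 1 => y) h, if_pos rfl]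
    show ((y.length : ℝ≥0∞)) * pw β ω 0 _ = F (ENNReal.ofReal β) ω 0 y
    rw [pw, Fin.prod_univ_zero, mul_one]
    rfl
  | succ n ih =>
    intro y
    rw [TS, ← (Fin.consEquiv (fun _ : Fin (n+2) => List ℕ+)).tsum_eq, ENNReal.tsum_prod']
    have hterm : ∀ (a : List ℕ+) (w : Fin (n+1) → List ℕ+),
        (if (Fin.consEquiv (fun _ : Fin (n+2) => List ℕ+)) (a, w) 0 = y
          then ((((Fin.consEquiv (fun _ : Fin (n+2) => List ℕ+)) (a, w)) (Fin.last (n+1))).length : ℝ≥0∞)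
            * pw β ω (n+1) ((Fin.consEquiv (fun _ : Fin (n+2) => List ℕ+)) (a, w)) else 0)
        = if a = y then ENNReal.ofReal (step β ω a (w 0))
            * (((w (Fin.last n)).length : ℝ≥0∞) * pw β ω n w) else 0 := by
      intro a w
      have h0 : (Fin.consEquiv (fun _ : Fin (n+2) => List ℕ+)) (a, w) = Fin.cons a w := rfl
      rw [h0, Fin.cons_zero]
      by_cases ha : a = y
      · rw [if_pos ha, if_pos ha, ← Fin.succ_last, Fin.cons_succ, pw_cons]
        ring
      · rw [if_neg ha, if_neg ha]
    calc (∑' (a : List ℕ+) (w : Fin (n+1) → List ℕ+), _)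
        = ∑' (a : List ℕ+) (w : Fin (n+1) → List ℕ+),
            (if a = y then ENNReal.ofReal (step β ω a (w 0))
              * (((w (Fin.last n)).length : ℝ≥0∞) * pw β ω n w) else 0) :=
          tsum_congr fun a => tsum_congr fun w => hterm a w
      _ = ∑' (w : Fin (n+1) → List ℕ+), ENNReal.ofReal (step β ω y (w 0))
              * (((w (Fin.last n)).length : ℝ≥0∞) * pw β ω n w) := by
          rw [tsum_eq_single y]
          · exact tsum_congr fun w => by rw [if_pos rfl]
          · intro a ha
            rw [ENNReal.summable.tsum_eq_zero_iff |>.2]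
            intro w
            rw [if_neg ha]
      _ = ∑' (w : Fin (n+1) → List ℕ+) (z : List ℕ+),
            (if w 0 = z then ENNReal.ofReal (step β ω y z)
              * (((w (Fin.last n)).length : ℝ≥0∞) * pw β ω n w) else 0) := by
          apply tsum_congr
          intro w
          rw [tsum_eq_single (w 0)]
          · rw [if_pos rfl]
          · intro z hz
            rw [if_neg (fun h => hz h.symm)]
      _ = ∑' (z : List ℕ+) (w : Fin (n+1) → List ℕ+),
            (if w 0 = z then ENNReal.ofReal (step β ω y z)
              * (((w (Fin.last n)).length : ℝ≥0∞) * pw β ω n w) else 0) :=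
          ENNReal.tsum_comm
      _ = ∑' (z : List ℕ+), ENNReal.ofReal (step β ω y z) * TS β ω n z := by
          apply tsum_congr
          intro z
          rw [TS, ← ENNReal.tsum_mul_left]
          apply tsum_congr
          intro w
          by_cases hw : w 0 = z
          · rw [if_pos hw, if_pos hw]
          · rw [if_neg hw, if_neg hw, mul_zero]
      _ = ∑' (z : List ℕ+), ENNReal.ofReal (step β ω y z) * F (ENNReal.ofReal β) ω n z :=
          tsum_congr fun z => by rw [ih]
      _ = F (ENNReal.ofReal β) ω (n+1) y := by
          rw [tsum_stepE hβ ω y]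
          rfl

end
end GWAux
namespace GWAux
open GWSpeed ENNReal
noncomputable section

variable {β : ℝ}

/-- visited set of a finite trajectory -/
def SS {n : ℕ} (x : Fin (n+1) → List ℕ+) : Finset (List ℕ+) :=
  Finset.image x Finset.univ

/-- extension of a partial environment by the constant 1 -/
def extg {n : ℕ} (x : Fin (n+1) → List ℕ+) (g : {v // v ∈ SS x} → ℕ+) : Env :=
  fun v => if h : v ∈ SS x then g ⟨v, h⟩ else 1

/-- trajectory extended to all times -/
def xe {n : ℕ} (x : Fin (n+1) → List ℕ+) : ℕ → List ℕ+ :=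
  fun i => if h : i < n + 1 then x ⟨i, h⟩ else []

/-- elementary cylinder event -/
def D {n : ℕ} (x : Fin (n+1) → List ℕ+) (g : {v // v ∈ SS x} → ℕ+) :
    Set (Env × (ℕ → List ℕ+)) :=
  {p | (∀ v ∈ SS x, p.1 v = extg x g v) ∧ ∀ i : Fin (n+1), p.2 (i : ℕ) = x i}

/-- index type of the cylinder partition -/
abbrev I (n : ℕ) : Type := Σ x : Fin (n+1) → List ℕ+, ({v // v ∈ SS x} → ℕ+)

lemma measurableSet_pnat (s : Set ℕ+) : MeasurableSet s :=
  MeasurableSpace.measurableSet_top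

lemma measurableSet_list (s : Set (List ℕ+)) : MeasurableSet s :=
  MeasurableSpace.measurableSet_top

lemma measurableSet_D {n : ℕ} (x : Fin (n+1) → List ℕ+) (g : {v // v ∈ SS x} → ℕ+) :
    MeasurableSet (D x g) := by
  have h1 : D x g = (⋂ v ∈ SS x, {p : Env × (ℕ → List ℕ+) | p.1 v = extg x g v}) ∩
      (⋂ i : Fin (n+1), {p : Env × (ℕ → List ℕ+) | p.2 (i : ℕ) = x i}) := by
    ext p
    simp [D, Set.mem_iInter]
  rw [h1]
  apply MeasurableSet.inter
  · apply MeasurableSet.biInter (Set.to_countable _)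
    intro v _
    have hf : Measurable (fun p : Env × (ℕ → List ℕ+) => p.1 v) :=
      (measurable_pi_apply v).comp measurable_fst
    exact hf (measurableSet_pnat {extg x g v})
  · apply MeasurableSet.iInter
    intro i
    have hf : Measurable (fun p : Env × (ℕ → List ℕ+) => p.2 (i : ℕ)) :=
      (measurable_pi_apply (i : ℕ)).comp measurable_snd
    exact hf (measurableSet_list {x i})

lemma measurable_pw_env (β : ℝ) {n : ℕ} (x : Fin (n+1) → List ℕ+) :
    Measurable (fun ω : Env => pw β ω n x) := by
  apply Finset.measurable_prod
  intro i _
  have h : (fun ω : Env => ENNReal.ofReal (step β ω (x i.castSucc) (x i.succ)))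
      = (fun k : ℕ+ => ENNReal.ofReal (step β (fun _ => k) (x i.castSucc) (x i.succ)))
        ∘ (fun ω : Env => ω (x i.castSucc)) := by
    funext ω
    rfl
  rw [h]
  exact measurable_from_top.comp (measurable_pi_apply _)

lemma step_congr {ω ω' : Env} {u w : List ℕ+} (h : ω u = ω' u) :
    step β ω u w = step β ω' u w := by
  unfold step
  rw [h]

lemma pw_congr {n : ℕ} {x : Fin (n+1) → List ℕ+} {ω ω' : Env}
    (h : ∀ v ∈ SS x, ω v = ω' v) : pw β ω n x = pw β ω' n x := by
  unfold pw
  apply Finset.prod_congr rfl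
  intro i _
  rw [step_congr (h (x i.castSucc) (Finset.mem_image_of_mem x (Finset.mem_univ _)))]

section Annealed

variable {P : Measure ℕ+} {μ : Measure (Env × (ℕ → List ℕ+))}

/-- value of the annealed measure on elementary cylinders -/
lemma measure_D (hβ : 0 < β) (hμ : IsAnnealedLaw β P μ) [IsProbabilityMeasure P]
    {n : ℕ} (x : Fin (n+1) → List ℕ+) (g : {v // v ∈ SS x} → ℕ+) (hx0 : x 0 = []) :
    μ (D x g) = (∏ v ∈ (SS x).attach, P {g v}) * pw β (extg x g) n x := by
  haveI : IsProbabilityMeasure μ := hμ.1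
  have hxe0 : xe x 0 = [] := by
    simp only [xe, Nat.zero_lt_succ, dif_pos]
    exact hx0
  have hmem : ∀ i, i < n → xe x i ∈ SS x := by
    intro i hi
    simp only [xe, dif_pos (by omega : i < n + 1)]
    exact Finset.mem_image_of_mem x (Finset.mem_univ _)
  have hev := hμ.2.2 n (xe x) (SS x) (extg x g) hxe0 hmem
  have hset : {p : Env × (ℕ → List ℕ+) |
      (∀ v ∈ SS x, p.1 v = extg x g v) ∧ ∀ i, i ≤ n → p.2 i = xe x i} = D x g := by
    ext p
    simp only [Set.mem_setOf_eq, D]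
    constructor
    · rintro ⟨h1, h2⟩
      refine ⟨h1, fun i => ?_⟩
      have := h2 (i : ℕ) (Fin.is_le i)
      rw [this]
      simp only [xe, dif_pos i.isLt, Fin.eta]
    · rintro ⟨h1, h2⟩
      refine ⟨h1, fun i hi => ?_⟩
      have hlt : i < n + 1 := by omega
      simp only [xe, dif_pos hlt]
      exact h2 ⟨i, hlt⟩
  rw [hset] at hev
  have hfin : μ (D x g) ≠ ⊤ := measure_ne_top μ _
  have hPnn : ∀ v ∈ SS x, (0:ℝ) ≤ (P {extg x g v}).toReal := fun v _ => ENNReal.toReal_nonneg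
  have hμD : μ (D x g) = ENNReal.ofReal
      ((∏ v ∈ SS x, (P {extg x g v}).toReal)
        * ∏ i ∈ Finset.range n, step β (extg x g) (xe x i) (xe x (i + 1))) := by
    rw [← hev, ENNReal.ofReal_toReal hfin]
  rw [hμD, ENNReal.ofReal_mul (Finset.prod_nonneg hPnn),
    ENNReal.ofReal_prod_of_nonneg hPnn,
    ENNReal.ofReal_prod_of_nonneg (fun i _ => step_nonneg hβ.le _ _ _)]
  congr 1
  · rw [← Finset.prod_attach (SS x) (fun v => ENNReal.ofReal (P {extg x g v}).toReal)]
    apply Finset.prod_congr rfl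
    intro a _
    rw [ENNReal.ofReal_toReal (measure_ne_top P _)]
    congr 2
    simp only [extg, dif_pos a.2]
  · rw [pw, ← Fin.prod_univ_eq_prod_range
      (fun i => ENNReal.ofReal (step β (extg x g) (xe x i) (xe x (i + 1)))) n]
    apply Finset.prod_congr rfl
    intro i _
    congr 2
    · simp only [xe, dif_pos (by omega : (i : ℕ) < n + 1)]
      exact congrArg x (Fin.ext rfl)
    · simp only [xe, dif_pos (by omega : (i : ℕ) + 1 < n + 1)]
      exact congrArg x (Fin.ext rfl)

lemma measure_D_ne_root (hμ : IsAnnealedLaw β P μ) {n : ℕ}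
    (x : Fin (n+1) → List ℕ+) (g : {v // v ∈ SS x} → ℕ+) (hx0 : x 0 ≠ []) :
    μ (D x g) = 0 := by
  haveI : IsProbabilityMeasure μ := hμ.1
  have hC : μ {p : Env × (ℕ → List ℕ+) | p.2 0 = []}ᶜ = 0 := by
    have hm : MeasurableSet {p : Env × (ℕ → List ℕ+) | p.2 0 = []} := by
      have hf : Measurable (fun p : Env × (ℕ → List ℕ+) => p.2 0) :=
        (measurable_pi_apply 0).comp measurable_snd
      exact hf (measurableSet_list {[]})
    rw [measure_compl hm (measure_ne_top μ _), hμ.2.1, measure_univ, tsub_self]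
  apply measure_mono_null _ hC
  intro p hp
  have := hp.2 0
  simp only [Set.mem_compl_iff, Set.mem_setOf_eq]
  intro h0
  apply hx0
  rw [← this]
  exact h0

/-- the fundamental partition identity for the expected depth -/
lemma lintegral_len (hμ : IsAnnealedLaw β P μ) (n : ℕ) :
    ∫⁻ p, (((p.2 n).length : ℝ≥0∞)) ∂μ
      = ∑' j : I n, (((j.1 (Fin.last n)).length : ℝ≥0∞)) * μ (D j.1 j.2) := by
  have hpt : ∀ p : Env × (ℕ → List ℕ+), (((p.2 n).length : ℝ≥0∞))
      = ∑' j : I n, Set.indicator (D j.1 j.2)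
          (fun _ => (((j.1 (Fin.last n)).length : ℝ≥0∞))) p := by
    intro p
    set x₀ : Fin (n+1) → List ℕ+ := fun i => p.2 (i : ℕ) with hx₀
    set g₀ : {v // v ∈ SS x₀} → ℕ+ := fun v => p.1 (v : List ℕ+) with hg₀
    have hmem : p ∈ D x₀ g₀ := by
      constructor
      · intro v hv
        simp only [extg, dif_pos hv]
        rfl
      · intro i
        rfl
    rw [tsum_eq_single (⟨x₀, g₀⟩ : I n)]
    · rw [Set.indicator_of_mem hmem]
      rfl
    · rintro ⟨x, g⟩ hne
      apply Set.indicator_of_notMem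
      intro hp
      apply hne
      have hx : x = x₀ := by
        funext i
        exact (hp.2 i).symm
      subst hx
      have hg : g = g₀ := by
        funext a
        have h1 := hp.1 (a : List ℕ+) a.2
        simp only [extg, dif_pos a.2, Subtype.coe_eta] at h1
        rw [hg₀, ← h1]
      rw [hg]
  calc ∫⁻ p, (((p.2 n).length : ℝ≥0∞)) ∂μ
      = ∫⁻ p, ∑' j : I n, Set.indicator (D j.1 j.2)
          (fun _ => (((j.1 (Fin.last n)).length : ℝ≥0∞))) p ∂μ := by
        apply lintegral_congr
        intro p
        exact hpt p
    _ = ∑' j : I n, ∫⁻ p, Set.indicator (D j.1 j.2)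
          (fun _ => (((j.1 (Fin.last n)).length : ℝ≥0∞))) p ∂μ := by
        apply lintegral_tsum
        intro j
        exact ((measurable_const.indicator (measurableSet_D j.1 j.2))).aemeasurable
    _ = ∑' j : I n, (((j.1 (Fin.last n)).length : ℝ≥0∞)) * μ (D j.1 j.2) :=
        tsum_congr fun j => lintegral_indicator_const (measurableSet_D j.1 j.2) _

end Annealed
end
end GWAux
namespace GWAux
open GWSpeed ENNReal
noncomputable section
variable {β : ℝ} {P : Measure ℕ+} {μ : Measure (Env × (ℕ → List ℕ+))}

def extS (S : Finset (List ℕ+)) (g : {v // v ∈ S} → ℕ+) : Env :=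
  fun v => if h : v ∈ S then g ⟨v, h⟩ else 1

lemma measurableSet_piece (S : Finset (List ℕ+)) (f : Env) :
    MeasurableSet {ω : Env | ∀ v ∈ S, ω v = f v} := by
  have h1 : {ω : Env | ∀ v ∈ S, ω v = f v} = ⋂ v ∈ S, {ω : Env | ω v = f v} := by
    ext ω; simp [Set.mem_iInter]
  rw [h1]
  apply MeasurableSet.biInter (Set.to_countable _)
  intro v _
  have hf : Measurable (fun ω : Env => ω v) := measurable_pi_apply v
  exact hf (measurableSet_pnat {f v})

lemma root_null (hμ : IsAnnealedLaw β P μ) :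
    μ {p : Env × (ℕ → List ℕ+) | p.2 0 = []}ᶜ = 0 := by
  haveI : IsProbabilityMeasure μ := hμ.1
  have hm : MeasurableSet {p : Env × (ℕ → List ℕ+) | p.2 0 = []} := by
    have hf : Measurable (fun p : Env × (ℕ → List ℕ+) => p.2 0) :=
      (measurable_pi_apply 0).comp measurable_snd
    exact hf (measurableSet_list {[]})
  rw [measure_compl hm (measure_ne_top μ _), hμ.2.1, measure_univ, tsub_self]

lemma nu_cyl (hμ : IsAnnealedLaw β P μ) [IsProbabilityMeasure P]
    (S : Finset (List ℕ+)) (f : Env) :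
    μ.map Prod.fst {ω : Env | ∀ v ∈ S, ω v = f v} = ∏ v ∈ S, P {f v} := by
  haveI : IsProbabilityMeasure μ := hμ.1
  rw [Measure.map_apply measurable_fst (measurableSet_piece S f)]
  set B : Set (Env × (ℕ → List ℕ+)) := {p | ∀ v ∈ S, p.1 v = f v} with hB
  have hpre : Prod.fst ⁻¹' {ω : Env | ∀ v ∈ S, ω v = f v} = B := rfl
  set C : Set (Env × (ℕ → List ℕ+)) := {p | p.2 0 = []} with hCdef
  have hCm : MeasurableSet C := by
    have hf : Measurable (fun p : Env × (ℕ → List ℕ+) => p.2 0) :=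
      (measurable_pi_apply 0).comp measurable_snd
    exact hf (measurableSet_list {[]})
  have hBC : μ B = μ (B ∩ C) := by
    have h1 := measure_inter_add_diff (μ := μ) B hCm
    have hdiff : μ (B \ C) = 0 :=
      measure_mono_null (fun p hp => hp.2) (root_null hμ)
    rw [← h1, hdiff, add_zero]
  have hev := hμ.2.2 0 (fun _ => []) S f rfl (by intro i hi; omega)
  have hset : {p : Env × (ℕ → List ℕ+) |
      (∀ v ∈ S, p.1 v = f v) ∧ ∀ i, i ≤ 0 → p.2 i = (fun _ => ([] : List ℕ+)) i}
      = B ∩ C := by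
    ext p
    constructor
    · rintro ⟨h1, h2⟩
      exact ⟨h1, h2 0 le_rfl⟩
    · rintro ⟨h1, h2⟩
      refine ⟨h1, fun i hi => ?_⟩
      rw [Nat.le_zero.1 hi]
      exact h2
  rw [hset] at hev
  rw [Finset.range_zero, Finset.prod_empty, mul_one] at hev
  have hfin : μ (B ∩ C) = ENNReal.ofReal (∏ v ∈ S, (P {f v}).toReal) := by
    rw [← hev, ENNReal.ofReal_toReal (measure_ne_top μ _)]
  rw [hpre, hBC, hfin, ENNReal.ofReal_prod_of_nonneg (fun _ _ => ENNReal.toReal_nonneg)]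
  exact Finset.prod_congr rfl fun v _ => ENNReal.ofReal_toReal (measure_ne_top P _)

lemma lintegral_env_partition (ν : Measure Env) (S : Finset (List ℕ+)) (h : Env → ℝ≥0∞)
    (hmeas : Measurable h) (hdep : ∀ ω ω' : Env, (∀ v ∈ S, ω v = ω' v) → h ω = h ω') :
    ∫⁻ ω, h ω ∂ν = ∑' g : {v // v ∈ S} → ℕ+,
      h (extS S g) * ν {ω : Env | ∀ v ∈ S, ω v = extS S g v} := by
  have hpt : ∀ ω : Env, h ω = ∑' g : {v // v ∈ S} → ℕ+,
      Set.indicator {ω' : Env | ∀ v ∈ S, ω' v = extS S g v} (fun _ => h (extS S g)) ω := by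
    intro ω
    set g₀ : {v // v ∈ S} → ℕ+ := fun a => ω (a : List ℕ+) with hg₀
    have hmem : ω ∈ {ω' : Env | ∀ v ∈ S, ω' v = extS S g₀ v} := by
      intro v hv
      simp only [extS, dif_pos hv]
      rfl
    rw [tsum_eq_single g₀]
    · rw [Set.indicator_of_mem hmem]
      exact hdep _ _ (fun v hv => hmem v hv)
    · intro g hg
      apply Set.indicator_of_notMem
      intro hω
      apply hg
      funext a
      have h1 := hω (a : List ℕ+) a.2
      simp only [extS, dif_pos a.2, Subtype.coe_eta] at h1
      exact h1.symm
  calc ∫⁻ ω, h ω ∂ν = ∫⁻ ω, ∑' g : {v // v ∈ S} → ℕ+,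
        Set.indicator {ω' : Env | ∀ v ∈ S, ω' v = extS S g v}
          (fun _ => h (extS S g)) ω ∂ν := lintegral_congr hpt
    _ = ∑' g : {v // v ∈ S} → ℕ+, ∫⁻ ω, Set.indicator
          {ω' : Env | ∀ v ∈ S, ω' v = extS S g v} (fun _ => h (extS S g)) ω ∂ν :=
        lintegral_tsum fun g =>
          ((measurable_const.indicator (measurableSet_piece S (extS S g)))).aemeasurable
    _ = _ := tsum_congr fun g => lintegral_indicator_const (measurableSet_piece S _) _

lemma nu_good (hμ : IsAnnealedLaw β P μ) [IsProbabilityMeasure P] :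
    μ.map Prod.fst {ω : Env | ∃ v, P {ω v} = 0} = 0 := by
  have hsub : {ω : Env | ∃ v, P {ω v} = 0} ⊆
      ⋃ j : (List ℕ+) × {a : ℕ+ // P {a} = 0}, {ω : Env | ω j.1 = (j.2 : ℕ+)} := by
    rintro ω ⟨v, hv⟩
    exact Set.mem_iUnion.2 ⟨(v, ⟨ω v, hv⟩), rfl⟩
  apply measure_mono_null hsub
  refine le_antisymm (le_trans (measure_iUnion_le _) ?_) zero_le
  have hterm : ∀ j : (List ℕ+) × {a : ℕ+ // P {a} = 0},
      μ.map Prod.fst {ω : Env | ω j.1 = (j.2 : ℕ+)} = 0 := by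
    intro j
    have hs : {ω : Env | ω j.1 = (j.2 : ℕ+)}
        = {ω : Env | ∀ v ∈ ({j.1} : Finset (List ℕ+)), ω v = (fun _ => (j.2 : ℕ+)) v} := by
      ext ω
      simp
    rw [hs, nu_cyl hμ, Finset.prod_singleton]
    exact j.2.2
  rw [tsum_congr hterm]
  simp

lemma lint_master (hβ : 0 < β) (hμ : IsAnnealedLaw β P μ) [IsProbabilityMeasure P] (n : ℕ) :
    ∫⁻ p, (((p.2 n).length : ℝ≥0∞)) ∂μ
      = ∫⁻ ω, F (ENNReal.ofReal β) ω n [] ∂(μ.map Prod.fst) := by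
  have hmpw : ∀ x : Fin (n+1) → List ℕ+, Measurable (fun ω : Env =>
      (((x (Fin.last n)).length : ℝ≥0∞)) * pw β ω n x) :=
    fun x => (measurable_pw_env β x).const_mul _
  have hmif : ∀ x : Fin (n+1) → List ℕ+, Measurable (fun ω : Env =>
      if x 0 = [] then (((x (Fin.last n)).length : ℝ≥0∞)) * pw β ω n x else 0) := by
    intro x
    by_cases hx : x 0 = []
    · simpa [hx] using hmpw x
    · simpa [hx] using measurable_const
  calc ∫⁻ p, (((p.2 n).length : ℝ≥0∞)) ∂μ
      = ∑' j : I n, (((j.1 (Fin.last n)).length : ℝ≥0∞)) * μ (D j.1 j.2) :=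
        lintegral_len hμ n
    _ = ∑' x : Fin (n+1) → List ℕ+, ∑' g : {v // v ∈ SS x} → ℕ+,
          (((x (Fin.last n)).length : ℝ≥0∞)) * μ (D x g) :=
        ENNReal.tsum_sigma' _
    _ = ∑' x : Fin (n+1) → List ℕ+,
          (if x 0 = [] then (((x (Fin.last n)).length : ℝ≥0∞))
            * ∫⁻ ω, pw β ω n x ∂(μ.map Prod.fst) else 0) := by
        apply tsum_congr
        intro x
        by_cases hx : x 0 = []
        · rw [if_pos hx,
            lintegral_env_partition (μ.map Prod.fst) (SS x) _ (measurable_pw_env β x)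
              (fun ω ω' hagree => pw_congr hagree),
            ← ENNReal.tsum_mul_left]
          apply tsum_congr
          intro g
          rw [measure_D hβ hμ x g hx, nu_cyl hμ (SS x) (extS (SS x) g)]
          have hprod : ∏ v ∈ SS x, P {extS (SS x) g v} = ∏ v ∈ (SS x).attach, P {g v} := by
            rw [← Finset.prod_attach (SS x) (fun v => P {extS (SS x) g v})]
            exact Finset.prod_congr rfl fun a _ => by
              simp only [extS, dif_pos a.2, Subtype.coe_eta]
          rw [hprod]
          have hee : extg x g = extS (SS x) g := rfl
          rw [← hee]
          ring
        · rw [if_neg hx]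
          simp [measure_D_ne_root hμ x _ hx]
    _ = ∑' x : Fin (n+1) → List ℕ+, ∫⁻ ω,
          (if x 0 = [] then (((x (Fin.last n)).length : ℝ≥0∞)) * pw β ω n x else 0)
            ∂(μ.map Prod.fst) := by
        apply tsum_congr
        intro x
        by_cases hx : x 0 = []
        · rw [if_pos hx, ← lintegral_const_mul _ (measurable_pw_env β x)]
          apply lintegral_congr
          intro ω
          rw [if_pos hx]
        · rw [if_neg hx]
          rw [lintegral_congr (fun ω => by rw [if_neg hx]), lintegral_zero]
    _ = ∫⁻ ω, ∑' x : Fin (n+1) → List ℕ+,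
          (if x 0 = [] then (((x (Fin.last n)).length : ℝ≥0∞)) * pw β ω n x else 0)
            ∂(μ.map Prod.fst) :=
        (lintegral_tsum fun x => (hmif x).aemeasurable).symm
    _ = ∫⁻ ω, TS β ω n [] ∂(μ.map Prod.fst) := rfl
    _ = ∫⁻ ω, F (ENNReal.ofReal β) ω n [] ∂(μ.map Prod.fst) :=
        lintegral_congr fun ω => TS_eq_F hβ ω n _

lemma pw_zero_of_long {ω : Env} {n : ℕ} {x : Fin (n+1) → List ℕ+}
    (hx0 : x 0 = []) (hlen : n < (x (Fin.last n)).length) : pw β ω n x = 0 := by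
  by_contra hne
  have hall : ∀ i : Fin n, ENNReal.ofReal (step β ω (x i.castSucc) (x i.succ)) ≠ 0 := by
    intro i
    intro h0
    apply hne
    unfold pw
    exact Finset.prod_eq_zero (Finset.mem_univ i) h0
  have key : ∀ j : ℕ, ∀ hj : j < n + 1, (x ⟨j, hj⟩).length ≤ j := by
    intro j
    induction j with
    | zero =>
      intro hj
      have h0 : (⟨0, hj⟩ : Fin (n+1)) = 0 := rfl
      rw [h0, hx0]
      simp
    | succ j ihj =>
      intro hj
      have hjn : j < n := by omega
      have hstep : step β ω (x (Fin.castSucc ⟨j, hjn⟩)) (x (Fin.succ ⟨j, hjn⟩)) ≠ 0 := by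
        intro h
        exact hall ⟨j, hjn⟩ (by rw [h, ENNReal.ofReal_zero])
      have hlen2 := length_le_of_step_ne_zero hstep
      have h1 : (Fin.castSucc ⟨j, hjn⟩ : Fin (n+1)) = ⟨j, by omega⟩ := rfl
      have h2 : (Fin.succ ⟨j, hjn⟩ : Fin (n+1)) = ⟨j+1, hj⟩ := rfl
      rw [h1, h2] at hlen2
      have := ihj (by omega)
      omega
  have hlast : (Fin.last n : Fin (n+1)) = ⟨n, by omega⟩ := rfl
  have := key n (by omega)
  rw [← hlast] at this
  omega

lemma len_gt_null (hβ : 0 < β) (hμ : IsAnnealedLaw β P μ) [IsProbabilityMeasure P] (n : ℕ) :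
    μ {p : Env × (ℕ → List ℕ+) | n < (p.2 n).length} = 0 := by
  have hsub : {p : Env × (ℕ → List ℕ+) | n < (p.2 n).length} ⊆
      ⋃ j : {j : I n // n < (j.1 (Fin.last n)).length}, D j.1.1 j.1.2 := by
    intro p hp
    refine Set.mem_iUnion.2 ⟨⟨⟨fun i => p.2 (i : ℕ), fun v => p.1 (v : List ℕ+)⟩, hp⟩, ?_⟩
    exact ⟨fun v hv => by simp only [extg, dif_pos hv], fun i => rfl⟩
  apply measure_mono_null hsub
  refine le_antisymm (le_trans (measure_iUnion_le _) ?_) zero_le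
  have hterm : ∀ j : {j : I n // n < (j.1 (Fin.last n)).length}, μ (D j.1.1 j.1.2) = 0 := by
    rintro ⟨⟨x, g⟩, hj⟩
    by_cases hx0 : x 0 = []
    · rw [measure_D hβ hμ x g hx0, pw_zero_of_long hx0 hj, mul_zero]
    · exact measure_D_ne_root hμ x g hx0
  rw [tsum_congr hterm]
  simp

end
end GWAux
namespace GWAux
open GWSpeed ENNReal
noncomputable section
variable {β : ℝ} {P : Measure ℕ+} {μ : Measure (Env × (ℕ → List ℕ+))}

lemma speed_lim (hβ : 0 < β) (hμ : IsAnnealedLaw β P μ) [IsProbabilityMeasure P] {v : ℝ}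
    (hv : ∀ᵐ p ∂μ, Filter.Tendsto (fun n : ℕ => (((p.2 n).length : ℝ)) / (n : ℝ))
      Filter.atTop (nhds v)) :
    Filter.Tendsto (fun n : ℕ => (∫⁻ p, (((p.2 n).length : ℝ≥0∞)) ∂μ) / (n : ℝ≥0∞))
      Filter.atTop (nhds (ENNReal.ofReal v)) ∧ 0 ≤ v := by
  haveI : IsProbabilityMeasure μ := hμ.1
  have hmlen : ∀ n : ℕ, Measurable (fun p : Env × (ℕ → List ℕ+) =>
      (((p.2 n).length : ℝ≥0∞))) := by
    intro n
    have h1 : (fun p : Env × (ℕ → List ℕ+) => (((p.2 n).length : ℝ≥0∞)))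
        = (fun l : List ℕ+ => ((l.length : ℝ≥0∞)))
          ∘ ((fun f : ℕ → List ℕ+ => f n) ∘ Prod.snd) := rfl
    rw [h1]
    exact measurable_from_top.comp ((measurable_pi_apply n).comp measurable_snd)
  have hbd : ∀ᵐ p ∂μ, ∀ n : ℕ, (p.2 n).length ≤ n := by
    rw [MeasureTheory.ae_all_iff]
    intro n
    rw [MeasureTheory.ae_iff]
    have hseteq : {p : Env × (ℕ → List ℕ+) | ¬(p.2 n).length ≤ n}
        = {p : Env × (ℕ → List ℕ+) | n < (p.2 n).length} := by
      ext p; simp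
    rw [hseteq]
    exact len_gt_null hβ hμ n
  set G : ℕ → (Env × (ℕ → List ℕ+)) → ℝ≥0∞ :=
    fun n p => (((p.2 n).length : ℝ≥0∞)) / (n : ℝ≥0∞) with hGdef
  have hGm : ∀ n, Measurable (G n) := fun n => (hmlen n).div_const _
  have hGb : ∀ n, G n ≤ᵐ[μ] (fun _ => (1 : ℝ≥0∞)) := by
    intro n
    filter_upwards [hbd] with p hp
    exact ENNReal.div_le_of_le_mul (by rw [one_mul]; exact_mod_cast hp n)
  have htend : ∀ᵐ p ∂μ, Filter.Tendsto (fun n => G n p) Filter.atTop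
      (nhds (ENNReal.ofReal v)) := by
    filter_upwards [hv] with p hp
    have h1 : Filter.Tendsto (fun n : ℕ => ENNReal.ofReal (((p.2 n).length : ℝ) / (n : ℝ)))
        Filter.atTop (nhds (ENNReal.ofReal v)) := ENNReal.tendsto_ofReal hp
    apply h1.congr'
    filter_upwards [Filter.eventually_gt_atTop 0] with n hn
    rw [ENNReal.ofReal_div_of_pos (by exact_mod_cast hn), ENNReal.ofReal_natCast]
    congr 1
    exact ENNReal.ofReal_natCast _
  have hdct := MeasureTheory.tendsto_lintegral_of_dominated_convergence
    (μ := μ) (F := G) (f := fun _ => ENNReal.ofReal v) (fun _ => 1) hGm hGb (by simp) htend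
  have hconst : ∫⁻ _, ENNReal.ofReal v ∂μ = ENNReal.ofReal v := by
    rw [MeasureTheory.lintegral_const, measure_univ, mul_one]
  rw [hconst] at hdct
  constructor
  · have heq : ∀ n, ∫⁻ p, G n p ∂μ
        = (∫⁻ p, (((p.2 n).length : ℝ≥0∞)) ∂μ) / (n : ℝ≥0∞) := by
      intro n
      simp only [hGdef, div_eq_mul_inv]
      exact MeasureTheory.lintegral_mul_const _ (hmlen n)
    exact Filter.Tendsto.congr heq hdct
  · haveI : (MeasureTheory.ae μ).NeBot :=
      MeasureTheory.ae_neBot.2 (MeasureTheory.IsProbabilityMeasure.ne_zero μ)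
    obtain ⟨p, hp⟩ := hv.exists
    exact ge_of_tendsto' hp (fun n => by positivity)

end
end GWAux


open GWSpeed
open GWAux

open scoped ENNReal

/-- If every point of the support of `P₂` is at most every point of the support of `P₁`
(and `P₁ ≠ P₂`), then `v(β, P₁) ≥ v(β, P₂)` for every `β > 0`. -/
theorem speed_monotone_separated_supports (P₁ P₂ : Measure ℕ+)
    [IsProbabilityMeasure P₁] [IsProbabilityMeasure P₂]
    (hne : P₁ ≠ P₂)
    (hsupp : ∀ a b : ℕ+, P₂ {a} ≠ 0 → P₁ {b} ≠ 0 → a ≤ b) :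
    ∀ β : ℝ, 0 < β →
      ∀ v₁ v₂ : ℝ, HasSpeed β P₁ v₁ → HasSpeed β P₂ v₂ → v₂ ≤ v₁ := by
  intro β hβ v₁ v₂ h1 h2
  obtain ⟨μ₁, hμ₁, hv₁⟩ := h1
  obtain ⟨μ₂, hμ₂, hv₂⟩ := h2
  classical
  haveI : IsProbabilityMeasure μ₁ := hμ₁.1
  haveI : IsProbabilityMeasure μ₂ := hμ₂.1
  have hsupp1 : ∃ a : ℕ+, P₁ {a} ≠ 0 := by
    by_contra hs
    push_neg at hs
    have h0 : P₁ Set.univ = 0 := by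
      have hu : (Set.univ : Set ℕ+) = ⋃ a : ℕ+, {a} := by ext a; simp
      rw [hu]
      refine le_antisymm (le_trans (measure_iUnion_le _) ?_) zero_le
      rw [tsum_congr hs]
      simp
    rw [measure_univ] at h0
    exact one_ne_zero h0
  have hfind : ∃ k : ℕ, ∃ a : ℕ+, (a : ℕ) = k ∧ P₁ {a} ≠ 0 := by
    obtain ⟨a, ha⟩ := hsupp1; exact ⟨a, a, rfl, ha⟩
  obtain ⟨b₀, hb₀k, hb₀⟩ := Nat.find_spec hfind
  have hb₀min : ∀ a : ℕ+, P₁ {a} ≠ 0 → b₀ ≤ a := by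
    intro a ha
    have hk : Nat.find hfind ≤ (a : ℕ) := Nat.find_min' hfind ⟨a, rfl, ha⟩
    rw [← PNat.coe_le_coe, hb₀k]
    exact hk
  set b : ℝ≥0∞ := ENNReal.ofReal β with hbdef
  have hb0 : b ≠ 0 := (ENNReal.ofReal_pos.2 hβ).ne'
  have hbt : b ≠ ⊤ := ENNReal.ofReal_ne_top
  set ω₀ : Env := fun _ => b₀ with hω₀
  have key : ∀ n : ℕ, ∫⁻ p, (((p.2 n).length : ℝ≥0∞)) ∂μ₂
      ≤ ∫⁻ p, (((p.2 n).length : ℝ≥0∞)) ∂μ₁ := by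
    intro n
    rw [lint_master hβ hμ₂ n, lint_master hβ hμ₁ n]
    haveI : IsProbabilityMeasure (μ₂.map Prod.fst) :=
      Measure.isProbabilityMeasure_map measurable_fst.aemeasurable
    haveI : IsProbabilityMeasure (μ₁.map Prod.fst) :=
      Measure.isProbabilityMeasure_map measurable_fst.aemeasurable
    have hub : ∫⁻ ω, F b ω n [] ∂(μ₂.map Prod.fst) ≤ F b ω₀ n [] := by
      have hae : ∀ᵐ ω ∂(μ₂.map Prod.fst), F b ω n [] ≤ F b ω₀ n [] := by
        rw [MeasureTheory.ae_iff]
        apply measure_mono_null _ (nu_good hμ₂)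
        intro ω hω
        simp only [Set.mem_setOf_eq] at hω ⊢
        by_contra hno
        push_neg at hno
        exact hω (F_mono hb0 hbt (fun v w => hsupp (ω w) b₀ (hno w) hb₀) n [] [] le_rfl rfl)
      calc ∫⁻ ω, F b ω n [] ∂(μ₂.map Prod.fst)
          ≤ ∫⁻ _, F b ω₀ n [] ∂(μ₂.map Prod.fst) := lintegral_mono_ae hae
        _ = F b ω₀ n [] := by rw [lintegral_const, measure_univ, mul_one]
    have hlb : F b ω₀ n [] ≤ ∫⁻ ω, F b ω n [] ∂(μ₁.map Prod.fst) := by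
      have hae : ∀ᵐ ω ∂(μ₁.map Prod.fst), F b ω₀ n [] ≤ F b ω n [] := by
        rw [MeasureTheory.ae_iff]
        apply measure_mono_null _ (nu_good hμ₁)
        intro ω hω
        simp only [Set.mem_setOf_eq] at hω ⊢
        by_contra hno
        push_neg at hno
        exact hω (F_mono hb0 hbt (fun v w => hb₀min (ω v) (hno v)) n [] [] le_rfl rfl)
      calc F b ω₀ n []
          = ∫⁻ _, F b ω₀ n [] ∂(μ₁.map Prod.fst) := by
            rw [lintegral_const, measure_univ, mul_one]
        _ ≤ _ := lintegral_mono_ae hae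
    exact le_trans hub hlb
  obtain ⟨ht₁, hv₁0⟩ := speed_lim hβ hμ₁ hv₁
  obtain ⟨ht₂, hv₂0⟩ := speed_lim hβ hμ₂ hv₂
  have hle : ENNReal.ofReal v₂ ≤ ENNReal.ofReal v₁ :=
    le_of_tendsto_of_tendsto' ht₂ ht₁ (fun n => ENNReal.div_le_div_right (key n) _)
  exact (ENNReal.ofReal_le_ofReal_iff hv₁0).1 hle
end
end

section
/- Let β > 1 be a real number and let Z₁ ≥ Z₂ ≥ 1 be positive integers. Define η₃ = (1/(β+1) − 1/(Z₂β+1))·(1/Z₂) and η₄ = (1/(β+1) − 1/(Z₁β+1))·(1/Z₁). Then Z₂·max(η₃ − η₄, 0) ≤ (1/(β+1))·(1 − Z₂/Z₁). In particular, (1/(β+1) − 1/(Z₂β+1)) − (1/(β+1) − 1/(Z₁β+1))·(Z₂/Z₁) ≤ (1/(β+1))·(1 − Z₂/Z₁). -/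
/-- Deterministic inequality for the coupling overlap defect: for `β > 1` and positive
integers `Z₁ ≥ Z₂ ≥ 1`, with `η₃ = (1/(β+1) − 1/(Z₂β+1))/Z₂` and
`η₄ = (1/(β+1) − 1/(Z₁β+1))/Z₁`, one has `Z₂·[η₃ − η₄]₊ ≤ (1/(β+1))·(1 − Z₂/Z₁)`; in
particular `(1/(β+1) − 1/(Z₂β+1)) − (1/(β+1) − 1/(Z₁β+1))·(Z₂/Z₁) ≤ (1/(β+1))·(1 − Z₂/Z₁)`. -/
theorem coupling_defect_bound (β : ℝ) (hβ : 1 < β) (Z₁ Z₂ : ℕ+) (h : Z₂ ≤ Z₁) :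
    ((Z₂ : ℕ) : ℝ) *
        max ((1 / (β + 1) - 1 / (((Z₂ : ℕ) : ℝ) * β + 1)) * (1 / ((Z₂ : ℕ) : ℝ))
             - (1 / (β + 1) - 1 / (((Z₁ : ℕ) : ℝ) * β + 1)) * (1 / ((Z₁ : ℕ) : ℝ))) 0
      ≤ (1 / (β + 1)) * (1 - ((Z₂ : ℕ) : ℝ) / ((Z₁ : ℕ) : ℝ)) ∧
    (1 / (β + 1) - 1 / (((Z₂ : ℕ) : ℝ) * β + 1))
        - (1 / (β + 1) - 1 / (((Z₁ : ℕ) : ℝ) * β + 1)) * (((Z₂ : ℕ) : ℝ) / ((Z₁ : ℕ) : ℝ))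
      ≤ (1 / (β + 1)) * (1 - ((Z₂ : ℕ) : ℝ) / ((Z₁ : ℕ) : ℝ)) := by
  set a : ℝ := ((Z₂ : ℕ) : ℝ) with ha
  set b : ℝ := ((Z₁ : ℕ) : ℝ) with hb
  have ha1 : (1 : ℝ) ≤ a := Nat.one_le_cast.mpr Z₂.pos
  have hab : a ≤ b := Nat.cast_le.mpr h
  have ha0 : 0 < a := lt_of_lt_of_le one_pos ha1
  have hb0 : 0 < b := lt_of_lt_of_le ha0 hab
  have hβ0 : 0 < β + 1 := by linarith
  have haβ : 0 < a * β + 1 := by nlinarith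
  have hbβ : 0 < b * β + 1 := by nlinarith
  have key : (1 / (β + 1) - 1 / (a * β + 1))
      - (1 / (β + 1) - 1 / (b * β + 1)) * (a / b)
      ≤ (1 / (β + 1)) * (1 - a / b) := by
    have h1 : a / (b * (b * β + 1)) ≤ 1 / (a * β + 1) := by
      rw [div_le_div_iff₀ (by positivity) haβ]
      nlinarith [mul_nonneg (mul_nonneg (sub_nonneg.2 hab) (by linarith : (0:ℝ) ≤ a + b)) (by linarith : (0:ℝ) ≤ β)]
    have h2 : (1 / (β + 1) - 1 / (a * β + 1))
        - (1 / (β + 1) - 1 / (b * β + 1)) * (a / b)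
        = (1 / (β + 1)) * (1 - a / b) + (a / (b * (b * β + 1)) - 1 / (a * β + 1)) := by
      field_simp; ring
    linarith
  refine ⟨?_, key⟩
  rcases le_or_gt ((1 / (β + 1) - 1 / (a * β + 1)) * (1 / a)
      - (1 / (β + 1) - 1 / (b * β + 1)) * (1 / b)) 0 with hc | hc
  · rw [max_eq_right hc, mul_zero]
    have : a / b ≤ 1 := (div_le_one hb0).2 hab
    exact mul_nonneg (by positivity) (by linarith)
  · rw [max_eq_left hc.le]
    calc a * ((1 / (β + 1) - 1 / (a * β + 1)) * (1 / a)
          - (1 / (β + 1) - 1 / (b * β + 1)) * (1 / b))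
        = (1 / (β + 1) - 1 / (a * β + 1))
          - (1 / (β + 1) - 1 / (b * β + 1)) * (a / b) := by
          field_simp
      _ ≤ _ := key
end

section
/- Let (Ω, F, P) be a probability space, let W ≥ 0 be a random variable and (Z_k)_{k≥1} a sequence of nonnegative random variables. Let m₁ > m₃ > m₂ > 1 be real numbers and suppose there exist constants α, D, C₁, C₂ > 0 such that: (a) P(W ≤ ε) ≤ D·ε^α for all ε ∈ (0, 1]; (b) P(|Z_k/m₁^k − W| ≥ ε) ≤ C₁·exp(−C₂·ε^{2/3}·m₁^{k/3}) for all k ≥ 1 and all ε > 0; (c) m₁ > m₂^{1/α}·m₃ and m₁ > m₂^{2/α}. Then m₂^k · P(Z_k ≤ m₃^k) → 0 as k → ∞. -/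
open MeasureTheory Filter

lemma aux_pow_mul_exp_neg (M c r : ℝ) (hM : 0 < M) (hc : 0 < c) (hr : 1 < r) :
    Tendsto (fun k : ℕ => M ^ k * Real.exp (-(c * r ^ k))) atTop (nhds 0) := by
  obtain ⟨n, hn⟩ := pow_unbounded_of_one_lt M hr
  have hrpos : (0:ℝ) < r := lt_trans one_pos hr
  have hrn : (0:ℝ) < r ^ n := pow_pos hrpos n
  have key : ∀ k : ℕ, M ^ k * Real.exp (-(c * r ^ k))
      ≤ ((Nat.factorial n : ℝ) / c ^ n) * (M / r ^ n) ^ k := by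
    intro k
    have hx : (0:ℝ) < c * r ^ k := by positivity
    have h1 : (c * r ^ k) ^ n / (Nat.factorial n : ℝ) ≤ Real.exp (c * r ^ k) :=
      Real.pow_div_factorial_le_exp _ hx.le n
    have h2 : Real.exp (-(c * r ^ k)) ≤ (Nat.factorial n : ℝ) / (c * r ^ k) ^ n := by
      rw [Real.exp_neg]
      have hpos : (0:ℝ) < (c * r ^ k) ^ n / (Nat.factorial n : ℝ) := by positivity
      calc (Real.exp (c * r ^ k))⁻¹
          ≤ ((c * r ^ k) ^ n / (Nat.factorial n : ℝ))⁻¹ := by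
            exact inv_anti₀ hpos h1
        _ = (Nat.factorial n : ℝ) / (c * r ^ k) ^ n := by rw [inv_div]
    calc M ^ k * Real.exp (-(c * r ^ k)) ≤ M ^ k * ((Nat.factorial n : ℝ) / (c * r ^ k) ^ n) := by
          exact mul_le_mul_of_nonneg_left h2 (by positivity)
      _ = ((Nat.factorial n : ℝ) / c ^ n) * (M / r ^ n) ^ k := by
          rw [mul_pow, div_pow, pow_right_comm r k n]
          field_simp
  have hlim : Tendsto (fun k : ℕ => ((Nat.factorial n : ℝ) / c ^ n) * (M / r ^ n) ^ k) atTop (nhds 0) := by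
    have : Tendsto (fun k : ℕ => (M / r ^ n) ^ k) atTop (nhds 0) := by
      apply tendsto_pow_atTop_nhds_zero_of_lt_one (by positivity)
      rw [div_lt_one hrn]; exact hn
    simpa using this.const_mul ((Nat.factorial n : ℝ) / c ^ n)
  exact squeeze_zero (fun k => by positivity) key hlim

/-- Abstract form of the key estimate in Corollary 1.5: if `W ≥ 0` has a polynomial left
tail `P(W ≤ ε) ≤ D·ε^α`, the `Z_k` concentrate around `W·m₁^k` with stretched-exponential
error `P(|Z_k/m₁^k − W| ≥ ε) ≤ C₁·exp(−C₂·ε^{2/3}·m₁^{k/3})`, and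
`m₁ > m₂^{1/α}·m₃`, `m₁ > m₂^{2/α}` (with `m₁ > m₃ > m₂ > 1`), then
`m₂^k·P(Z_k ≤ m₃^k) → 0` as `k → ∞`. -/
theorem small_generation_prob_decay {Ω : Type*} [MeasurableSpace Ω]
    (μ : Measure Ω) [IsProbabilityMeasure μ]
    (W : Ω → ℝ) (hWmeas : Measurable W) (hWnn : ∀ ω, 0 ≤ W ω)
    (Z : ℕ → Ω → ℝ) (hZmeas : ∀ k, Measurable (Z k)) (hZnn : ∀ k : ℕ, 1 ≤ k → ∀ ω, 0 ≤ Z k ω)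
    (m₁ m₂ m₃ : ℝ) (h2 : 1 < m₂) (h32 : m₂ < m₃) (h13 : m₃ < m₁)
    (α D C₁ C₂ : ℝ) (hα : 0 < α) (hD : 0 < D) (hC₁ : 0 < C₁) (hC₂ : 0 < C₂)
    (htail : ∀ ε : ℝ, 0 < ε → ε ≤ 1 → (μ {ω | W ω ≤ ε}).toReal ≤ D * ε ^ α)
    (hconc : ∀ k : ℕ, 1 ≤ k → ∀ ε : ℝ, 0 < ε →
      (μ {ω | ε ≤ |Z k ω / m₁ ^ k - W ω|}).toReal
        ≤ C₁ * Real.exp (-C₂ * ε ^ ((2 : ℝ) / 3) * m₁ ^ ((k : ℝ) / 3)))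
    (hgap₁ : m₂ ^ ((1 : ℝ) / α) * m₃ < m₁) (hgap₂ : m₂ ^ ((2 : ℝ) / α) < m₁) :
    Tendsto (fun k : ℕ => m₂ ^ k * (μ {ω | Z k ω ≤ m₃ ^ k}).toReal) atTop (nhds 0) := by
  have hm2 : (0:ℝ) < m₂ := lt_trans one_pos h2
  have hm3 : (0:ℝ) < m₃ := lt_trans hm2 h32
  have hm1 : (0:ℝ) < m₁ := lt_trans hm3 h13
  have hm1gt1 : (1:ℝ) < m₁ := lt_trans (lt_trans h2 h32) h13
  -- define thresholds
  set a : ℝ := max (m₃ / m₁) (m₁ ^ (-(1:ℝ)/2)) with ha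
  set b : ℝ := m₂ ^ (-(1:ℝ)/α) with hb
  have hblt1 : b < 1 := by
    apply Real.rpow_lt_one_of_one_lt_of_neg h2
    rw [neg_div]; exact neg_lt_zero.mpr (by positivity)
  have hab : a < b := by
    apply max_lt
    · -- m₃/m₁ < m₂^(-1/α)
      have h1 : (0:ℝ) < m₂ ^ ((1:ℝ)/α) := Real.rpow_pos_of_pos hm2 _
      rw [hb, neg_div, Real.rpow_neg hm2.le, inv_eq_one_div,
        div_lt_div_iff₀ hm1 h1, one_mul, mul_comm]
      exact hgap₁
    · -- m₁^(-1/2) < m₂^(-1/α)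
      have h1 : m₂ ^ ((1:ℝ)/α) < m₁ ^ ((1:ℝ)/2) := by
        have := Real.rpow_lt_rpow (Real.rpow_pos_of_pos hm2 _).le hgap₂
          (by norm_num : (0:ℝ) < 1/2)
        rwa [← Real.rpow_mul hm2.le, show (2:ℝ)/α * (1/2) = 1/α by field_simp] at this
      rw [hb, neg_div, neg_div, Real.rpow_neg hm2.le, Real.rpow_neg hm1.le]
      exact inv_strictAnti₀ (Real.rpow_pos_of_pos hm2 _) h1
  set θ : ℝ := (a + b) / 2 with hθ
  have hapos : 0 < a := lt_max_of_lt_right (Real.rpow_pos_of_pos hm1 _)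
  have hθpos : 0 < θ := by positivity
  have haθ : a < θ := by rw [hθ]; linarith
  have hθb : θ < b := by rw [hθ]; linarith
  have hθlt1 : θ < 1 := lt_trans hθb hblt1
  have h31θ : m₃ / m₁ ≤ θ := le_trans (le_max_left _ _) haθ.le
  -- q := m₂ * θ^α < 1
  have hθα : θ ^ α < m₂⁻¹ := by
    have := Real.rpow_lt_rpow hθpos.le hθb hα
    rwa [hb, ← Real.rpow_mul hm2.le,
      show -(1:ℝ)/α * α = -1 from div_mul_cancel₀ (-(1:ℝ)) hα.ne',
      Real.rpow_neg_one] at this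
  set q : ℝ := m₂ * θ ^ α with hq
  have hqpos : 0 < q := by
    have := Real.rpow_pos_of_pos hθpos α; positivity
  have hqlt1 : q < 1 := by
    rw [hq, ← mul_inv_cancel₀ (ne_of_gt hm2)]
    exact mul_lt_mul_of_pos_left hθα hm2
  -- r := θ^(2/3) * m₁^(1/3) > 1
  set r : ℝ := θ ^ ((2:ℝ)/3) * m₁ ^ ((1:ℝ)/3) with hr
  have hr1 : 1 < r := by
    have h1 : m₁ ^ (-(1:ℝ)/2) < θ := lt_of_le_of_lt (le_max_right _ _) haθ
    have h2' : (m₁ ^ (-(1:ℝ)/2)) ^ ((2:ℝ)/3) < θ ^ ((2:ℝ)/3) :=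
      Real.rpow_lt_rpow (Real.rpow_pos_of_pos hm1 _).le h1 (by norm_num)
    rw [← Real.rpow_mul hm1.le, show -(1:ℝ)/2 * (2/3) = -(1/3) by norm_num] at h2'
    have h3 : m₁ ^ (-(1:ℝ)/3) * m₁ ^ ((1:ℝ)/3) < θ ^ ((2:ℝ)/3) * m₁ ^ ((1:ℝ)/3) := by
      apply mul_lt_mul_of_pos_right _ (Real.rpow_pos_of_pos hm1 _)
      rwa [show -(1:ℝ)/3 = -(1/3) by norm_num]
    rwa [← Real.rpow_add hm1, show -(1:ℝ)/3 + 1/3 = 0 by norm_num, Real.rpow_zero] at h3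
  -- the bounding sequence
  set g : ℕ → ℝ := fun k => D * 2 ^ α * q ^ k + C₁ * (m₂ ^ k * Real.exp (-(C₂ * r ^ k)))
    with hg
  have hglim : Tendsto g atTop (nhds 0) := by
    have t1 : Tendsto (fun k : ℕ => D * 2 ^ α * q ^ k) atTop (nhds 0) := by
      simpa using (tendsto_pow_atTop_nhds_zero_of_lt_one hqpos.le hqlt1).const_mul
        (D * 2 ^ α)
    have t2 : Tendsto (fun k : ℕ => C₁ * (m₂ ^ k * Real.exp (-(C₂ * r ^ k)))) atTop
        (nhds 0) := by
      simpa using (aux_pow_mul_exp_neg m₂ C₂ r hm2 hC₂ hr1).const_mul C₁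
    simpa using t1.add t2
  -- eventual inequality
  have hev : ∀ᶠ k : ℕ in atTop, m₂ ^ k * (μ {ω | Z k ω ≤ m₃ ^ k}).toReal ≤ g k := by
    have hsmall : ∀ᶠ k : ℕ in atTop, θ ^ k < 1/2 :=
      (tendsto_pow_atTop_nhds_zero_of_lt_one hθpos.le hθlt1).eventually
        (gt_mem_nhds (by norm_num : (0:ℝ) < 1/2))
    filter_upwards [hsmall, eventually_ge_atTop 1] with k hk hk1
    have hθk : (0:ℝ) < θ ^ k := pow_pos hθpos k
    -- set inclusion
    have hsub : {ω | Z k ω ≤ m₃ ^ k} ⊆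
        {ω | W ω ≤ 2 * θ ^ k} ∪ {ω | θ ^ k ≤ |Z k ω / m₁ ^ k - W ω|} := by
      intro ω hω
      by_cases hW : W ω ≤ 2 * θ ^ k
      · exact Set.mem_union_left _ hW
      · right
        push_neg at hW
        have hZle : Z k ω / m₁ ^ k ≤ θ ^ k := by
          calc Z k ω / m₁ ^ k ≤ m₃ ^ k / m₁ ^ k := by
                gcongr
                exact hω
            _ = (m₃ / m₁) ^ k := by rw [div_pow]
            _ ≤ θ ^ k := pow_le_pow_left₀ (by positivity) h31θ k
        have : θ ^ k ≤ W ω - Z k ω / m₁ ^ k := by linarith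
        calc θ ^ k ≤ W ω - Z k ω / m₁ ^ k := this
          _ = -(Z k ω / m₁ ^ k - W ω) := by ring
          _ ≤ |Z k ω / m₁ ^ k - W ω| := neg_le_abs _
    have hmeasineq : (μ {ω | Z k ω ≤ m₃ ^ k}).toReal ≤
        (μ {ω | W ω ≤ 2 * θ ^ k}).toReal +
        (μ {ω | θ ^ k ≤ |Z k ω / m₁ ^ k - W ω|}).toReal := by
      rw [← ENNReal.toReal_add (measure_ne_top μ _) (measure_ne_top μ _)]
      apply ENNReal.toReal_mono (ENNReal.add_ne_top.mpr ⟨measure_ne_top μ _, measure_ne_top μ _⟩)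
      exact (measure_mono hsub).trans (measure_union_le _ _)
    have hbound1 : (μ {ω | W ω ≤ 2 * θ ^ k}).toReal ≤ D * (2 * θ ^ k) ^ α :=
      htail _ (by positivity) (by linarith)
    have hbound2 : (μ {ω | θ ^ k ≤ |Z k ω / m₁ ^ k - W ω|}).toReal
        ≤ C₁ * Real.exp (-C₂ * (θ ^ k) ^ ((2:ℝ)/3) * m₁ ^ ((k:ℝ)/3)) :=
      hconc k hk1 _ hθk
    -- rewrite the exponent and the polynomial bound
    have hexp : (θ ^ k) ^ ((2:ℝ)/3) * m₁ ^ ((k:ℝ)/3) = r ^ k := by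
      rw [hr, mul_pow, ← Real.rpow_natCast θ k, ← Real.rpow_mul hθpos.le,
        ← Real.rpow_natCast (θ ^ ((2:ℝ)/3)) k, ← Real.rpow_mul hθpos.le,
        ← Real.rpow_natCast (m₁ ^ ((1:ℝ)/3)) k, ← Real.rpow_mul hm1.le]
      congr 1
      · congr 1; ring
      · congr 1; ring
    have hpow : (2 * θ ^ k) ^ α = 2 ^ α * (θ ^ α) ^ k := by
      rw [Real.mul_rpow (by norm_num) hθk.le, ← Real.rpow_natCast θ k,
        ← Real.rpow_mul hθpos.le, ← Real.rpow_natCast (θ ^ α) k,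
        ← Real.rpow_mul hθpos.le, mul_comm (k:ℝ) α]
    calc m₂ ^ k * (μ {ω | Z k ω ≤ m₃ ^ k}).toReal
        ≤ m₂ ^ k * (D * (2 * θ ^ k) ^ α +
            C₁ * Real.exp (-C₂ * (θ ^ k) ^ ((2:ℝ)/3) * m₁ ^ ((k:ℝ)/3))) := by
          apply mul_le_mul_of_nonneg_left _ (by positivity)
          exact hmeasineq.trans (add_le_add hbound1 hbound2)
      _ = g k := by
          rw [hg, hpow]
          have : -C₂ * (θ ^ k) ^ ((2:ℝ)/3) * m₁ ^ ((k:ℝ)/3) = -(C₂ * r ^ k) := by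
            rw [← hexp]; ring
          rw [this, hq, mul_pow]
          rw [hr]
          simp only [mul_pow]
          ring
  exact squeeze_zero' (Eventually.of_forall fun k => by positivity) hev hglim
end

section
/- Let (Ω, F, P) be a probability space, let W ≥ 0 be a random variable and (Z_k)_{k≥1} a sequence of random variables each taking values in the positive integers (so Z_k ≥ 1). Let m₁ > m₃ > m₂ > 1 be real numbers and suppose there exist constants α, D, C₁, C₂ > 0 such that: (a) P(W ≤ ε) ≤ D·ε^α for all ε ∈ (0, 1]; (b) P(|Z_k/m₁^k − W| ≥ ε) ≤ C₁·exp(−C₂·ε^{2/3}·m₁^{k/3}) for all k ≥ 1 and all ε > 0; (c) m₁ > m₂^{1/α}·m₃ and m₁ > m₂^{2/α}. Then m₂^k · E[1/Z_k] → 0 as k → ∞. -/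
open MeasureTheory Filter

lemma aux_geom_mul_exp_neg (b c s : ℝ) (hb : 0 < b) (hc : 0 < c) (hs : 1 < s) :
    Tendsto (fun k : ℕ => b ^ k * Real.exp (-(c * s ^ k))) atTop (nhds 0) := by
  obtain ⟨n, hn⟩ : ∃ n : ℕ, b ≤ s ^ n :=
    ((tendsto_pow_atTop_atTop_of_one_lt hs).eventually_ge_atTop b).exists
  have hcomp : Tendsto (fun x : ℝ => x ^ n * Real.exp (-(c * x))) atTop (nhds 0) := by
    have h1 : Tendsto (fun x : ℝ => c * x) atTop atTop :=
      tendsto_id.const_mul_atTop hc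
    have h2 := (Real.tendsto_pow_mul_exp_neg_atTop_nhds_zero n).comp h1
    have h3 := h2.const_mul ((c ^ n)⁻¹)
    rw [mul_zero] at h3
    refine h3.congr fun x => ?_
    simp only [Function.comp_apply]
    rw [mul_pow]
    field_simp
  have hsk : Tendsto (fun k : ℕ => (s : ℝ) ^ k) atTop atTop :=
    tendsto_pow_atTop_atTop_of_one_lt hs
  have hmain := hcomp.comp hsk
  refine squeeze_zero (fun k => ?_) (fun k => ?_) hmain
  · positivity
  · simp only [Function.comp_apply]
    refine mul_le_mul_of_nonneg_right ?_ (Real.exp_nonneg _)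
    calc b ^ k ≤ (s ^ n) ^ k := pow_le_pow_left₀ hb.le hn k
      _ = (s ^ k) ^ n := by rw [← pow_mul, ← pow_mul, Nat.mul_comm]

/-- Abstract form of `m₂^k·E[1/Z_k] → 0`: if the positive-integer-valued `Z_k` concentrate
around `W·m₁^k` where `W ≥ 0` has a polynomial left tail `P(W ≤ ε) ≤ D·ε^α`, and
`m₁ > m₂^{1/α}·m₃`, `m₁ > m₂^{2/α}` (with `m₁ > m₃ > m₂ > 1`), then
`m₂^k·E[1/Z_k] → 0` as `k → ∞`. -/
theorem inverse_generation_moment_decay {Ω : Type*} [MeasurableSpace Ω]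
    (μ : Measure Ω) [IsProbabilityMeasure μ]
    (W : Ω → ℝ) (hWmeas : Measurable W) (hWnn : ∀ ω, 0 ≤ W ω)
    (Z : ℕ → Ω → ℕ) (hZmeas : ∀ k, Measurable (Z k)) (hZpos : ∀ k : ℕ, 1 ≤ k → ∀ ω, 1 ≤ Z k ω)
    (m₁ m₂ m₃ : ℝ) (h2 : 1 < m₂) (h32 : m₂ < m₃) (h13 : m₃ < m₁)
    (α D C₁ C₂ : ℝ) (hα : 0 < α) (hD : 0 < D) (hC₁ : 0 < C₁) (hC₂ : 0 < C₂)
    (htail : ∀ ε : ℝ, 0 < ε → ε ≤ 1 → (μ {ω | W ω ≤ ε}).toReal ≤ D * ε ^ α)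
    (hconc : ∀ k : ℕ, 1 ≤ k → ∀ ε : ℝ, 0 < ε →
      (μ {ω | ε ≤ |(Z k ω : ℝ) / m₁ ^ k - W ω|}).toReal
        ≤ C₁ * Real.exp (-C₂ * ε ^ ((2 : ℝ) / 3) * m₁ ^ ((k : ℝ) / 3)))
    (hgap₁ : m₂ ^ ((1 : ℝ) / α) * m₃ < m₁) (hgap₂ : m₂ ^ ((2 : ℝ) / α) < m₁) :
    Tendsto (fun k : ℕ => m₂ ^ k * ∫ ω, 1 / (Z k ω : ℝ) ∂μ) atTop (nhds 0) := by

  have h20 : (0:ℝ) < m₂ := lt_trans one_pos h2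
  have h30 : (0:ℝ) < m₃ := lt_trans h20 h32
  have h10 : (0:ℝ) < m₁ := lt_trans h30 h13
  have h31 : (1:ℝ) < m₃ := lt_trans h2 h32
  have h11 : (1:ℝ) < m₁ := lt_trans h31 h13
  -- p = m₂^{1/α}
  set p : ℝ := m₂ ^ ((1:ℝ)/α) with hp_def
  have hp0 : 0 < p := Real.rpow_pos_of_pos h20 _
  have hp1 : 1 < p := (Real.one_lt_rpow_iff_of_pos h20).2 (Or.inl ⟨h2, by positivity⟩)
  have hpα : p ^ α = m₂ := by
    rw [hp_def, ← Real.rpow_mul h20.le, one_div, inv_mul_cancel₀ hα.ne', Real.rpow_one]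
  have hpsq : p ^ (2:ℕ) = m₂ ^ ((2:ℝ)/α) := by
    rw [hp_def, ← Real.rpow_natCast (m₂ ^ ((1:ℝ)/α)) 2, ← Real.rpow_mul h20.le]
    congr 1; push_cast; ring
  have hlt_sqrt : p < Real.sqrt m₁ := by
    have h1 : p ^ (2:ℕ) < (Real.sqrt m₁) ^ (2:ℕ) := by
      rw [hpsq, Real.sq_sqrt h10.le]
      exact hgap₂
    exact lt_of_pow_lt_pow_left₀ 2 (Real.sqrt_nonneg m₁) h1
  have hsq0 : 0 < Real.sqrt m₁ := Real.sqrt_pos.2 h10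
  -- choose r
  set u : ℝ := max (m₃ / m₁) (Real.sqrt m₁)⁻¹ with hu_def
  have hu0 : 0 < u := lt_max_of_lt_left (by positivity)
  have huv : u < p⁻¹ := by
    refine max_lt ?_ ?_
    · rw [div_lt_iff₀ h10, ← div_eq_inv_mul, lt_div_iff₀ hp0, mul_comm]
      exact hgap₁
    · exact inv_strictAnti₀ hp0 hlt_sqrt
  set r : ℝ := (u + p⁻¹)/2 with hr_def
  have hur : u < r := by rw [hr_def]; linarith
  have hrp : r < p⁻¹ := by rw [hr_def]; linarith
  have hr0 : 0 < r := lt_trans hu0 hur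
  have hr1 : r < 1 := lt_trans hrp (by rw [inv_lt_one_iff₀]; right; exact hp1)
  have hm31r : m₃ / m₁ ≤ r := le_of_lt (lt_of_le_of_lt (le_max_left _ _) hur)
  have hsqrtr : (Real.sqrt m₁)⁻¹ < r := lt_of_le_of_lt (le_max_right _ _) hur
  -- m₂ * r^α < 1
  have hrα : m₂ * r ^ α < 1 := by
    have h1 : r ^ α < (p⁻¹) ^ α := Real.rpow_lt_rpow hr0.le hrp hα
    rw [Real.inv_rpow hp0.le, hpα] at h1
    calc m₂ * r ^ α < m₂ * m₂⁻¹ := (mul_lt_mul_iff_right₀ h20).2 h1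
      _ = 1 := mul_inv_cancel₀ h20.ne'
  -- s and hs1
  set s : ℝ := r ^ ((2:ℝ)/3) * m₁ ^ ((1:ℝ)/3) with hs_def
  have hs1 : 1 < s := by
    have hrs : 1 < r * Real.sqrt m₁ := by
      calc (1:ℝ) = (Real.sqrt m₁)⁻¹ * Real.sqrt m₁ := (inv_mul_cancel₀ hsq0.ne').symm
        _ < r * Real.sqrt m₁ := mul_lt_mul_of_pos_right hsqrtr hsq0
    have hr2m : 1 < r^2 * m₁ := by
      nlinarith [Real.sq_sqrt h10.le, Real.sqrt_nonneg m₁, hr0]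
    have hs_eq : s = (r^2 * m₁) ^ ((1:ℝ)/3) := by
      rw [hs_def, Real.mul_rpow (by positivity) h10.le]
      congr 1
      rw [← Real.rpow_natCast r 2, ← Real.rpow_mul hr0.le]
      norm_num
    rw [hs_eq]
    exact (Real.one_lt_rpow_iff_of_pos (by positivity)).2 (Or.inl ⟨hr2m, by norm_num⟩)
  -- pow identities
  have e1 : ∀ k : ℕ, ((r^k : ℝ)) ^ ((2:ℝ)/3) = (r ^ ((2:ℝ)/3)) ^ k := fun k => by
    rw [← Real.rpow_natCast r k, ← Real.rpow_mul hr0.le,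
      ← Real.rpow_natCast (r ^ ((2:ℝ)/3)) k, ← Real.rpow_mul hr0.le]
    congr 1; ring
  have e2 : ∀ k : ℕ, m₁ ^ ((k:ℝ)/3) = (m₁ ^ ((1:ℝ)/3)) ^ k := fun k => by
    rw [← Real.rpow_natCast (m₁ ^ ((1:ℝ)/3)) k, ← Real.rpow_mul h10.le]
    congr 1; ring
  have e3 : ∀ k : ℕ, ((r^k : ℝ)) ^ α = (r ^ α) ^ k := fun k => by
    rw [← Real.rpow_natCast r k, ← Real.rpow_mul hr0.le,
      ← Real.rpow_natCast (r ^ α) k, ← Real.rpow_mul hr0.le]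
    congr 1; ring
  -- the dominating sequence
  set g : ℕ → ℝ := fun k => D * 2 ^ α * (m₂ * r ^ α) ^ k
      + C₁ * (m₂ ^ k * Real.exp (-(C₂ * s ^ k))) + (m₂ / m₃) ^ k with hg_def
  have hgtend : Tendsto g atTop (nhds 0) := by
    have t1 : Tendsto (fun k : ℕ => D * 2 ^ α * (m₂ * r ^ α) ^ k) atTop (nhds 0) := by
      have := (tendsto_pow_atTop_nhds_zero_of_lt_one (by positivity) hrα).const_mul (D * 2 ^ α)
      simpa using this
    have t2 : Tendsto (fun k : ℕ => C₁ * (m₂ ^ k * Real.exp (-(C₂ * s ^ k)))) atTop (nhds 0) := by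
      have := (aux_geom_mul_exp_neg m₂ C₂ s h20 hC₂ hs1).const_mul C₁
      simpa using this
    have t3 : Tendsto (fun k : ℕ => (m₂ / m₃) ^ k) atTop (nhds 0) :=
      tendsto_pow_atTop_nhds_zero_of_lt_one (by positivity) (by rw [div_lt_one h30]; exact h32)
    have := (t1.add t2).add t3
    simpa using this
  -- squeeze
  have hrk0 : Tendsto (fun k : ℕ => r ^ k) atTop (nhds 0) :=
    tendsto_pow_atTop_nhds_zero_of_lt_one hr0.le hr1
  have hev : ∀ᶠ k : ℕ in atTop, r ^ k < 1/2 :=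
    hrk0.eventually_lt_const (by norm_num)
  refine squeeze_zero' ?_ ?_ hgtend
  · filter_upwards with k
    exact mul_nonneg (by positivity) (integral_nonneg fun ω => by positivity)
  · filter_upwards [eventually_ge_atTop 1, hev] with k hk1 hrk
    have h2rk : 2 * r ^ k ≤ 1 := by linarith
    have hZcast : Measurable fun ω => ((Z k ω : ℝ)) :=
      measurable_from_nat.comp (hZmeas k)
    set A : Set Ω := {ω | ((Z k ω : ℝ)) ≤ m₃ ^ k} with hA_def
    have hAmeas : MeasurableSet A := measurableSet_le hZcast measurable_const
    have hZ1 : ∀ ω, (1:ℝ) ≤ (Z k ω : ℝ) := fun ω => by exact_mod_cast hZpos k hk1 ω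
    -- integral bound
    have hfint : Integrable (fun ω => 1 / (Z k ω : ℝ)) μ := by
      refine Integrable.mono' (integrable_const (1:ℝ))
        (Measurable.aestronglyMeasurable (measurable_const.div hZcast)) ?_
      filter_upwards with ω
      rw [Real.norm_eq_abs, abs_of_nonneg (by positivity), div_le_one (by linarith [hZ1 ω])]
      exact hZ1 ω
    have hindint : Integrable (A.indicator fun _ => (1:ℝ)) μ :=
      (integrable_const (1:ℝ)).indicator hAmeas
    have hgint : Integrable (fun ω => A.indicator (fun _ => (1:ℝ)) ω + (m₃ ^ k)⁻¹) μ :=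
      hindint.add (integrable_const _)
    have hpt : ∀ ω, 1 / (Z k ω : ℝ) ≤ A.indicator (fun _ => (1:ℝ)) ω + (m₃ ^ k)⁻¹ := by
      intro ω
      by_cases hω : ω ∈ A
      · rw [Set.indicator_of_mem hω]
        have h1 : 1 / (Z k ω : ℝ) ≤ 1 := by
          rw [div_le_one (by linarith [hZ1 ω])]; exact hZ1 ω
        have hb2 : (0:ℝ) ≤ (m₃ ^ k)⁻¹ := by positivity
        linarith
      · rw [Set.indicator_of_notMem hω, zero_add, one_div]
        exact inv_anti₀ (by positivity) (le_of_lt (lt_of_not_ge hω))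
    have hint1 : ∫ ω, 1 / (Z k ω : ℝ) ∂μ ≤ (μ A).toReal + (m₃ ^ k)⁻¹ := by
      calc ∫ ω, 1 / (Z k ω : ℝ) ∂μ
          ≤ ∫ ω, (A.indicator (fun _ => (1:ℝ)) ω + (m₃ ^ k)⁻¹) ∂μ :=
            integral_mono hfint hgint hpt
        _ = (μ A).toReal + (m₃ ^ k)⁻¹ := by
            rw [integral_add hindint (integrable_const _), integral_indicator_const _ hAmeas,
              integral_const]
            simp
            rfl
    -- measure bound
    set B : Set Ω := {ω | W ω ≤ 2 * r ^ k} with hB_def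
    set Cs : Set Ω := {ω | r ^ k ≤ |(Z k ω : ℝ) / m₁ ^ k - W ω|} with hC_def
    have hsub : A ⊆ B ∪ Cs := by
      intro ω hω
      by_cases hB' : W ω ≤ 2 * r ^ k
      · exact Or.inl hB'
      · right
        push_neg at hB'
        have hZle : (Z k ω : ℝ) / m₁ ^ k ≤ r ^ k := by
          calc (Z k ω : ℝ) / m₁ ^ k ≤ m₃ ^ k / m₁ ^ k :=
                div_le_div_of_nonneg_right hω (by positivity)
            _ = (m₃ / m₁) ^ k := (div_pow m₃ m₁ k).symm
            _ ≤ r ^ k := pow_le_pow_left₀ (by positivity) hm31r k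
        show r ^ k ≤ |(Z k ω : ℝ) / m₁ ^ k - W ω|
        refine le_trans ?_ (neg_le_abs _)
        linarith
    have hmb : (μ A).toReal ≤ (μ B).toReal + (μ Cs).toReal := by
      calc (μ A).toReal ≤ ((μ B) + (μ Cs)).toReal := by
            refine ENNReal.toReal_mono ?_ (le_trans (measure_mono hsub) (measure_union_le _ _))
            exact ENNReal.add_ne_top.2 ⟨measure_ne_top _ _, measure_ne_top _ _⟩
        _ = (μ B).toReal + (μ Cs).toReal :=
            ENNReal.toReal_add (measure_ne_top _ _) (measure_ne_top _ _)
    have htailB : (μ B).toReal ≤ D * (2 * r ^ k) ^ α := htail (2 * r ^ k) (by positivity) h2rk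
    have hconcC : (μ Cs).toReal
        ≤ C₁ * Real.exp (-C₂ * (r ^ k) ^ ((2:ℝ)/3) * m₁ ^ ((k:ℝ)/3)) :=
      hconc k hk1 (r ^ k) (by positivity)
    have hexp_eq : -C₂ * (r ^ k) ^ ((2:ℝ)/3) * m₁ ^ ((k:ℝ)/3) = -(C₂ * s ^ k) := by
      rw [e1 k, e2 k, hs_def, mul_pow]
      ring
    rw [hexp_eq] at hconcC
    -- combine
    have hstep : m₂ ^ k * ∫ ω, 1 / (Z k ω : ℝ) ∂μ
        ≤ m₂ ^ k * (D * (2 * r ^ k) ^ α + C₁ * Real.exp (-(C₂ * s ^ k)) + (m₃ ^ k)⁻¹) := by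
      refine mul_le_mul_of_nonneg_left ?_ (by positivity)
      calc ∫ ω, 1 / (Z k ω : ℝ) ∂μ ≤ (μ A).toReal + (m₃ ^ k)⁻¹ := hint1
        _ ≤ (μ B).toReal + (μ Cs).toReal + (m₃ ^ k)⁻¹ := by linarith
        _ ≤ D * (2 * r ^ k) ^ α + C₁ * Real.exp (-(C₂ * s ^ k)) + (m₃ ^ k)⁻¹ := by linarith
    refine hstep.trans_eq ?_
    show _ = D * 2 ^ α * (m₂ * r ^ α) ^ k
      + C₁ * (m₂ ^ k * Real.exp (-(C₂ * s ^ k))) + (m₂ / m₃) ^ k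
    have e4 : (2 * r ^ k : ℝ) ^ α = 2 ^ α * (r ^ α) ^ k := by
      rw [Real.mul_rpow (by norm_num) (by positivity), e3 k]
    rw [e4, div_pow, mul_pow m₂ (r ^ α) k]
    field_simp
end

section
/- Let (Ω, F, P) be a probability space and m > 1 a real number. For each k ≥ 1 let Z_{1,k} and Z_{2,k} be random variables taking values in the positive integers, and let A_k, B_k be random variables taking values in the positive integers with A_k ≤ B_k almost surely. Assume: (i) m^k·E[1/Z_{1,k}] → 0 as k → ∞; (ii) A_k/m^k converges almost surely to a random variable W with 0 < W < ∞ almost surely; (iii) A_k/B_k → 0 almost surely. Then E[1/A_k − 1/B_k] > 0 for all sufficiently large k, and E[ (1/Z_{1,k} − 1/Z_{2,k})·1{Z_{1,k} < Z_{2,k}} ] / E[ 1/A_k − 1/B_k ] → 0 as k → ∞. -/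
open MeasureTheory Filter

/-- Abstract form of the vanishing ratio in Corollary 1.5: with positive-integer-valued
`Z_{1,k}, Z_{2,k}` and a monotone pair `A_k ≤ B_k`, if `m^k·E[1/Z_{1,k}] → 0`,
`A_k/m^k → W` a.s. with `0 < W < ∞` a.s., and `A_k/B_k → 0` a.s., then
`E[1/A_k − 1/B_k] > 0` for all large `k` and
`E[(1/Z_{1,k} − 1/Z_{2,k})·1{Z_{1,k} < Z_{2,k}}] / E[1/A_k − 1/B_k] → 0`. -/
theorem cutoff_ratio_vanishes {Ω : Type*} [MeasurableSpace Ω]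
    (μ : Measure Ω) [IsProbabilityMeasure μ]
    (m : ℝ) (hm : 1 < m)
    (Z₁ Z₂ A B : ℕ → Ω → ℕ)
    (hZ₁meas : ∀ k, Measurable (Z₁ k)) (hZ₂meas : ∀ k, Measurable (Z₂ k))
    (hAmeas : ∀ k, Measurable (A k)) (hBmeas : ∀ k, Measurable (B k))
    (hZ₁pos : ∀ k ω, 1 ≤ Z₁ k ω) (hZ₂pos : ∀ k ω, 1 ≤ Z₂ k ω)
    (hApos : ∀ k ω, 1 ≤ A k ω) (hBpos : ∀ k ω, 1 ≤ B k ω)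
    (hAB : ∀ k : ℕ, ∀ᵐ ω ∂μ, A k ω ≤ B k ω)
    (W : Ω → ℝ) (hWmeas : Measurable W) (hWpos : ∀ᵐ ω ∂μ, 0 < W ω)
    (hi : Tendsto (fun k : ℕ => m ^ k * ∫ ω, 1 / (Z₁ k ω : ℝ) ∂μ) atTop (nhds 0))
    (hii : ∀ᵐ ω ∂μ, Tendsto (fun k : ℕ => (A k ω : ℝ) / m ^ k) atTop (nhds (W ω)))
    (hiii : ∀ᵐ ω ∂μ, Tendsto (fun k : ℕ => (A k ω : ℝ) / (B k ω : ℝ)) atTop (nhds 0)) :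
    (∃ N : ℕ, ∀ k : ℕ, N ≤ k → 0 < ∫ ω, (1 / (A k ω : ℝ) - 1 / (B k ω : ℝ)) ∂μ) ∧
    Tendsto
      (fun k : ℕ =>
        (∫ ω, (if Z₁ k ω < Z₂ k ω then 1 / (Z₁ k ω : ℝ) - 1 / (Z₂ k ω : ℝ) else 0) ∂μ)
          / ∫ ω, (1 / (A k ω : ℝ) - 1 / (B k ω : ℝ)) ∂μ) atTop (nhds 0) := by
  have hm0 : (0:ℝ) < m := lt_trans one_pos hm
  have hmpos : ∀ k : ℕ, (0:ℝ) < m ^ k := fun k => pow_pos hm0 k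
  -- cast positivity
  have hAc : ∀ k ω, (0:ℝ) < (A k ω : ℝ) := fun k ω => by
    exact_mod_cast Nat.lt_of_lt_of_le Nat.zero_lt_one (hApos k ω)
  have hBc : ∀ k ω, (0:ℝ) < (B k ω : ℝ) := fun k ω => by
    exact_mod_cast Nat.lt_of_lt_of_le Nat.zero_lt_one (hBpos k ω)
  have hZ₁c : ∀ k ω, (1:ℝ) ≤ (Z₁ k ω : ℝ) := fun k ω => by exact_mod_cast hZ₁pos k ω
  have hZ₂c : ∀ k ω, (1:ℝ) ≤ (Z₂ k ω : ℝ) := fun k ω => by exact_mod_cast hZ₂pos k ω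
  have hAc1 : ∀ k ω, (1:ℝ) ≤ (A k ω : ℝ) := fun k ω => by exact_mod_cast hApos k ω
  have hBc1 : ∀ k ω, (1:ℝ) ≤ (B k ω : ℝ) := fun k ω => by exact_mod_cast hBpos k ω
  -- integrability helper
  have intOfBound : ∀ (f : Ω → ℝ) (C : ℝ), Measurable f → (∀ ω, ‖f ω‖ ≤ C) →
      Integrable f μ := fun f C hf hb =>
    (integrable_const C).mono' hf.aestronglyMeasurable (Filter.Eventually.of_forall hb)
  -- measurability of 1/A - 1/B
  have hABmeas : ∀ k, Measurable (fun ω => 1 / (A k ω : ℝ) - 1 / (B k ω : ℝ)) := fun k =>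
    ((measurable_from_top.comp (hAmeas k)).const_div 1).sub
      ((measurable_from_top.comp (hBmeas k)).const_div 1)
  have hABbd : ∀ k ω, ‖1 / (A k ω : ℝ) - 1 / (B k ω : ℝ)‖ ≤ 1 := by
    intro k ω
    have h1 : 0 < 1 / (A k ω : ℝ) := one_div_pos.mpr (hAc k ω)
    have h2 : 0 < 1 / (B k ω : ℝ) := one_div_pos.mpr (hBc k ω)
    have h3 : 1 / (A k ω : ℝ) ≤ 1 := by
      rw [div_le_one (hAc k ω)]; exact hAc1 k ω
    have h4 : 1 / (B k ω : ℝ) ≤ 1 := by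
      rw [div_le_one (hBc k ω)]; exact hBc1 k ω
    rw [Real.norm_eq_abs, abs_le]; constructor <;> linarith
  have hABint : ∀ k, Integrable (fun ω => 1 / (A k ω : ℝ) - 1 / (B k ω : ℝ)) μ :=
    fun k => intOfBound _ 1 (hABmeas k) (hABbd k)
  -- f k := m^k * (1/A - 1/B), g k := min (f k) 1
  set f : ℕ → Ω → ℝ := fun k ω => m ^ k * (1 / (A k ω : ℝ) - 1 / (B k ω : ℝ)) with hf
  set g : ℕ → Ω → ℝ := fun k ω => min (f k ω) 1 with hg
  have hfmeas : ∀ k, Measurable (f k) := fun k => (hABmeas k).const_mul _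
  have hfint : ∀ k, Integrable (f k) μ := fun k => ((hABint k).const_mul _)
  have hgmeas : ∀ k, Measurable (g k) := fun k => (hfmeas k).min measurable_const
  have hgint : ∀ k, Integrable (g k) μ := by
    intro k
    apply intOfBound _ (m ^ k + 1) (hgmeas k)
    intro ω
    have hfb : |f k ω| ≤ m ^ k := by
      rw [hf]; rw [abs_mul, abs_of_pos (hmpos k)]
      calc m ^ k * |1 / (A k ω : ℝ) - 1 / (B k ω : ℝ)| ≤ m ^ k * 1 := by
            exact mul_le_mul_of_nonneg_left (hABbd k ω) (le_of_lt (hmpos k))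
        _ = m ^ k := mul_one _
    rw [Real.norm_eq_abs]
    rcases abs_le.mp hfb with ⟨hl, hr⟩
    rw [abs_le]
    constructor
    · have : min (f k ω) 1 ≥ min (-(m^k)) 1 := min_le_min hl le_rfl
      have h2 : min (-(m^k)) 1 ≥ -(m^k + 1) := by
        rcases le_total (-(m^k)) 1 with h | h <;> simp [min_def, h] <;> nlinarith [hmpos k]
      linarith
    · have : min (f k ω) 1 ≤ 1 := min_le_right _ _
      nlinarith [hmpos k]
  -- limit function
  set G : Ω → ℝ := fun ω => min (W ω)⁻¹ 1 with hG
  have hGmeas : Measurable G := hWmeas.inv.min measurable_const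
  have hGint : Integrable G μ := by
    refine (integrable_const (1:ℝ)).mono' hGmeas.aestronglyMeasurable ?_
    filter_upwards [hWpos] with ω hW
    have h1 : 0 < (W ω)⁻¹ := inv_pos.mpr hW
    have : 0 < G ω := lt_min h1 one_pos
    have h2 : G ω ≤ 1 := min_le_right _ _
    rw [Real.norm_eq_abs, abs_of_pos this]; simpa using h2
  -- a.e. convergence of g k to G
  have hglim : ∀ᵐ ω ∂μ, Tendsto (fun k => g k ω) atTop (nhds (G ω)) := by
    filter_upwards [hWpos, hii, hiii] with ω hW hA hR
    have hA' : Tendsto (fun k => m ^ k / (A k ω : ℝ)) atTop (nhds (W ω)⁻¹) := by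
      have := hA.inv₀ (ne_of_gt hW)
      simpa [inv_div] using this
    have h2 : Tendsto (fun k => m ^ k / (A k ω : ℝ) * ((A k ω : ℝ) / (B k ω : ℝ)))
        atTop (nhds 0) := by simpa using hA'.mul hR
    have h3 := hA'.sub h2
    rw [sub_zero] at h3
    have heq : ∀ k, f k ω = m ^ k / (A k ω : ℝ) -
        m ^ k / (A k ω : ℝ) * ((A k ω : ℝ) / (B k ω : ℝ)) := by
      intro k
      have hA0 : (A k ω : ℝ) ≠ 0 := ne_of_gt (hAc k ω)
      have hB0 : (B k ω : ℝ) ≠ 0 := ne_of_gt (hBc k ω)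
      rw [hf]; field_simp
    have hflim : Tendsto (fun k => f k ω) atTop (nhds (W ω)⁻¹) := by
      simpa [← heq] using h3
    exact hflim.min tendsto_const_nhds
  -- a.e. bound for g k
  have hgbd : ∀ k, ∀ᵐ ω ∂μ, ‖g k ω‖ ≤ 1 := by
    intro k
    filter_upwards [hAB k] with ω hab
    have habc : (A k ω : ℝ) ≤ (B k ω : ℝ) := by exact_mod_cast hab
    have hfnn : 0 ≤ f k ω := by
      have : 1 / (B k ω : ℝ) ≤ 1 / (A k ω : ℝ) :=
        one_div_le_one_div_of_le (hAc k ω) habc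
      rw [hf]
      have : 0 ≤ 1 / (A k ω : ℝ) - 1 / (B k ω : ℝ) := by linarith
      positivity
    have h1 : 0 ≤ g k ω := le_min hfnn zero_le_one
    have h2 : g k ω ≤ 1 := min_le_right _ _
    rw [Real.norm_eq_abs, abs_of_nonneg h1]; exact h2
  -- dominated convergence
  have hDC : Tendsto (fun k => ∫ ω, g k ω ∂μ) atTop (nhds (∫ ω, G ω ∂μ)) := by
    exact tendsto_integral_of_dominated_convergence (fun _ => (1:ℝ))
      (fun k => (hgmeas k).aestronglyMeasurable) (integrable_const 1) hgbd hglim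
  -- L := ∫ G > 0
  set L : ℝ := ∫ ω, G ω ∂μ with hLdef
  have hLpos : 0 < L := by
    have hnn : 0 ≤ᵐ[μ] G := by
      filter_upwards [hWpos] with ω hW
      exact le_min (le_of_lt (inv_pos.mpr hW)) zero_le_one
    rw [hLdef, integral_pos_iff_support_of_nonneg_ae hnn hGint]
    have hsupp : ∀ᵐ ω ∂μ, ω ∈ Function.support G := by
      filter_upwards [hWpos] with ω hW
      exact ne_of_gt (lt_min (inv_pos.mpr hW) one_pos)
    have h0 : μ (Function.support G)ᶜ = 0 := by
      simpa [Set.compl_def] using ae_iff.mp hsupp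
    by_contra h
    push_neg at h
    have h1 : μ (Function.support G) = 0 := le_antisymm h zero_le
    have : μ Set.univ ≤ μ (Function.support G) + μ (Function.support G)ᶜ := by
      rw [← Set.union_compl_self (Function.support G)]
      exact measure_union_le _ _
    rw [h0, h1, measure_univ] at this
    simpa using this
  -- key eventual lower bound on m^k * D k
  set D : ℕ → ℝ := fun k => ∫ ω, (1 / (A k ω : ℝ) - 1 / (B k ω : ℝ)) ∂μ with hD
  have hfD : ∀ k, ∫ ω, f k ω ∂μ = m ^ k * D k := by
    intro k; rw [hf, hD]; exact integral_const_mul _ _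
  have hgf : ∀ k, ∫ ω, g k ω ∂μ ≤ m ^ k * D k := by
    intro k
    rw [← hfD k]
    exact integral_mono (hgint k) (hfint k) (fun ω => min_le_left _ _)
  have hkey : ∀ᶠ k in atTop, L / 2 ≤ m ^ k * D k := by
    have hev : ∀ᶠ k in atTop, L / 2 < ∫ ω, g k ω ∂μ :=
      hDC.eventually (eventually_gt_nhds (by linarith))
    filter_upwards [hev] with k hk
    exact le_trans (le_of_lt hk) (hgf k)
  have hDpos : ∀ k, L / 2 ≤ m ^ k * D k → 0 < D k := by
    intro k hk
    have h1 : 0 < m ^ k * D k := lt_of_lt_of_le (by linarith) hk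
    have h2 := div_pos h1 (hmpos k)
    rwa [mul_comm, mul_div_assoc, div_self (ne_of_gt (hmpos k)), mul_one] at h2
  constructor
  · rcases (eventually_atTop.mp hkey) with ⟨N, hN⟩
    exact ⟨N, fun k hk => hDpos k (hN k hk)⟩
  · -- numerator facts
    set Nm : ℕ → ℝ := fun k =>
      ∫ ω, (if Z₁ k ω < Z₂ k ω then 1 / (Z₁ k ω : ℝ) - 1 / (Z₂ k ω : ℝ) else 0) ∂μ
      with hNm
    have hnum_meas : ∀ k, Measurable (fun ω =>
        if Z₁ k ω < Z₂ k ω then 1 / (Z₁ k ω : ℝ) - 1 / (Z₂ k ω : ℝ) else 0) := by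
      intro k
      exact Measurable.ite (measurableSet_lt (hZ₁meas k) (hZ₂meas k))
        (((measurable_from_top.comp (hZ₁meas k)).const_div 1).sub
          ((measurable_from_top.comp (hZ₂meas k)).const_div 1)) measurable_const
    have hZ₁int : ∀ k, Integrable (fun ω => 1 / (Z₁ k ω : ℝ)) μ := by
      intro k
      apply intOfBound _ 1 ((measurable_from_top.comp (hZ₁meas k)).const_div 1)
      intro ω
      show ‖1 / (Z₁ k ω : ℝ)‖ ≤ 1
      have h0 : (0:ℝ) < (Z₁ k ω : ℝ) := lt_of_lt_of_le one_pos (hZ₁c k ω)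
      rw [Real.norm_eq_abs, abs_of_pos (one_div_pos.mpr h0)]
      rw [div_le_one h0]; exact hZ₁c k ω
    have hnum_int : ∀ k, Integrable (fun ω =>
        if Z₁ k ω < Z₂ k ω then 1 / (Z₁ k ω : ℝ) - 1 / (Z₂ k ω : ℝ) else 0) μ := by
      intro k
      apply intOfBound _ 1 (hnum_meas k)
      intro ω
      by_cases h : Z₁ k ω < Z₂ k ω <;> simp only [h, if_true, if_false]
      · have h1 : (0:ℝ) < (Z₁ k ω : ℝ) := lt_of_lt_of_le one_pos (hZ₁c k ω)
        have h2 : (0:ℝ) < (Z₂ k ω : ℝ) := lt_of_lt_of_le one_pos (hZ₂c k ω)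
        have h3 : 1 / (Z₁ k ω : ℝ) ≤ 1 := by rw [div_le_one h1]; exact hZ₁c k ω
        have h4 : 0 < 1 / (Z₂ k ω : ℝ) := one_div_pos.mpr h2
        have h5 : (0:ℝ) < 1 / (Z₁ k ω : ℝ) := one_div_pos.mpr h1
        have h6 : 1 / (Z₂ k ω : ℝ) ≤ 1 := by rw [div_le_one h2]; exact hZ₂c k ω
        rw [Real.norm_eq_abs, abs_le]; constructor <;> linarith
      · simp
    have hnum_nonneg : ∀ k, 0 ≤ Nm k := by
      intro k
      apply integral_nonneg
      intro ω
      by_cases h : Z₁ k ω < Z₂ k ω <;> simp only [h, if_true, if_false, le_refl]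
      · have h1 : (0:ℝ) < (Z₁ k ω : ℝ) := lt_of_lt_of_le one_pos (hZ₁c k ω)
        have h2 : (Z₁ k ω : ℝ) ≤ (Z₂ k ω : ℝ) := by exact_mod_cast le_of_lt h
        have := one_div_le_one_div_of_le h1 h2
        simp only [Pi.zero_apply]; linarith
      · simp
    have hnum_le : ∀ k, Nm k ≤ ∫ ω, 1 / (Z₁ k ω : ℝ) ∂μ := by
      intro k
      apply integral_mono (hnum_int k) (hZ₁int k)
      intro ω
      by_cases h : Z₁ k ω < Z₂ k ω <;> simp only [h, if_true, if_false]
      · have h4 : 0 < 1 / (Z₂ k ω : ℝ) :=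
          one_div_pos.mpr (lt_of_lt_of_le one_pos (hZ₂c k ω))
        linarith
      · exact le_of_lt (one_div_pos.mpr (lt_of_lt_of_le one_pos (hZ₁c k ω)))
    have hZ₁nonneg : ∀ k, 0 ≤ ∫ ω, 1 / (Z₁ k ω : ℝ) ∂μ := by
      intro k; apply integral_nonneg; intro ω
      exact le_of_lt (one_div_pos.mpr (lt_of_lt_of_le one_pos (hZ₁c k ω)))
    -- squeeze
    have hub : ∀ᶠ k in atTop, Nm k / D k ≤ 2 / L * (m ^ k * ∫ ω, 1 / (Z₁ k ω : ℝ) ∂μ) := by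
      filter_upwards [hkey] with k hk
      have hDk : 0 < D k := hDpos k hk
      have hlow : L / 2 / m ^ k ≤ D k := by
        calc L / 2 / m ^ k = L / 2 * (m ^ k)⁻¹ := by rw [div_eq_mul_inv]
          _ ≤ m ^ k * D k * (m ^ k)⁻¹ := by
              exact mul_le_mul_of_nonneg_right hk (by positivity)
          _ = D k := by field_simp
      have hlpos : 0 < L / 2 / m ^ k := by positivity
      calc Nm k / D k ≤ (∫ ω, 1 / (Z₁ k ω : ℝ) ∂μ) / (L / 2 / m ^ k) := by
            apply div_le_div₀ (hZ₁nonneg k) (hnum_le k) hlpos hlow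
        _ = 2 / L * (m ^ k * ∫ ω, 1 / (Z₁ k ω : ℝ) ∂μ) := by
            field_simp
    have hlb : ∀ᶠ k in atTop, 0 ≤ Nm k / D k := by
      filter_upwards [hkey] with k hk
      exact div_nonneg (hnum_nonneg k) (le_of_lt (hDpos k hk))
    have hrhs : Tendsto (fun k => 2 / L * (m ^ k * ∫ ω, 1 / (Z₁ k ω : ℝ) ∂μ))
        atTop (nhds 0) := by
      have := hi.const_mul (2 / L)
      simpa using this
    exact squeeze_zero' hlb hub hrhs
end
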